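/- arXiv:2011.11935 — 5 statements merged into one kernel-verified Lean document; each statement's English description precedes it below -/
import Mathlib

section
/- (Hoffman) Let t ≥ 3 be an integer. Then there exists a positive constant λ(t) such that: if a finite simple graph G contains neither K_{1,t} nor K̃_{2t} as an induced subgraph, then the smallest eigenvalue of G satisfies λ_min(G) ≥ -λ(t). -/
set_option linter.unusedSectionVars false
set_option maxHeartbeats 1000000
open Finset


open scoped Classical

/-- The adjacency matrix of a simple graph, over `ℝ`. -/
noncomputable def adjMat {V : Type*} [Fintype V] (G : SimpleGraph V) : Matrix V V ℝ :=
  Matrix.of fun i j => if G.Adj i j then (1 : ℝ) else 0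

/-- The smallest (real) eigenvalue of a matrix. -/
noncomputable def matMinEig {V : Type*} [Fintype V] (A : Matrix V V ℝ) : ℝ :=
  sInf {μ : ℝ | ∃ v : V → ℝ, v ≠ 0 ∧ A.mulVec v = μ • v}

/-- The smallest eigenvalue of a graph. -/
noncomputable def minEig {V : Type*} [Fintype V] (G : SimpleGraph V) : ℝ :=
  matMinEig (adjMat G)

/-- The degree (valency) of a vertex. -/
noncomputable def deg {V : Type*} [Fintype V] (G : SimpleGraph V) (v : V) : ℕ :=
  (G.neighborSet v).ncard

/-- The star `K_{1,t}`: vertex `0` is the center, adjacent to the `t` pairwise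
non-adjacent leaves. -/
def starG (t : ℕ) : SimpleGraph (Fin (t + 1)) :=
  SimpleGraph.fromRel (fun x _ => x = 0)

/-- The graph `K̃_{2t}` on `2t+1` vertices: a clique on the first `2t` vertices,
together with a last vertex adjacent to exactly the first `t` vertices of the clique. -/
def tildeK (t : ℕ) : SimpleGraph (Fin (2 * t + 1)) :=
  SimpleGraph.fromRel
    (fun x y => (x.val < 2 * t ∧ y.val < 2 * t) ∨ (x.val = 2 * t ∧ y.val < t))

namespace Hoff
variable {V : Type*} [Fintype V] [DecidableEq V]

lemma no_star {t : ℕ} {G : SimpleGraph V} (hstar : IsEmpty (starG t ↪g G))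
    (c : V) (T : Finset V) (hTc : T.card = t)
    (hadj : ∀ u ∈ T, G.Adj c u)
    (hind : ∀ u ∈ T, ∀ w ∈ T, u ≠ w → ¬ G.Adj u w) : False := by
  have e := (Finset.equivFinOfCardEq hTc).symm
  set φ : Fin (t+1) → V := Fin.cases c (fun i => ((e i : T) : V)) with hφ
  have hφs : ∀ i : Fin t, φ i.succ = ((e i : T) : V) := fun i => rfl
  have hmem : ∀ i : Fin t, ((e i : T) : V) ∈ T := fun i => (e i).2
  have hne : ∀ i : Fin t, ((e i : T) : V) ≠ c := by
    intro i h
    exact G.loopless.irrefl c (by nth_rewrite 1 [← h]; exact (hadj _ (hmem i)).symm)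
  have hinj : Function.Injective φ := by
    intro a b hab
    induction a using Fin.cases with
    | zero =>
      induction b using Fin.cases with
      | zero => rfl
      | succ j => exact absurd hab.symm (hne j)
    | succ i =>
      induction b using Fin.cases with
      | zero => exact absurd hab (hne i)
      | succ j =>
        have : (e i : T) = (e j : T) := Subtype.ext hab
        rw [e.injective this]
  have hiff : ∀ a b : Fin (t+1), G.Adj (φ a) (φ b) ↔ (starG t).Adj a b := by
    intro a b
    simp only [starG, SimpleGraph.fromRel_adj]
    induction a using Fin.cases with
    | zero =>
      induction b using Fin.cases with
      | zero => simp
      | succ j =>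
        simp only [hφs]
        constructor
        · intro _; exact ⟨(Fin.succ_ne_zero j).symm, Or.inl trivial⟩
        · intro _; exact hadj _ (hmem j)
    | succ i =>
      induction b using Fin.cases with
      | zero =>
        simp only [hφs]
        constructor
        · intro _; exact ⟨Fin.succ_ne_zero i, Or.inr trivial⟩
        · intro _; exact (hadj _ (hmem i)).symm
      | succ j =>
        simp only [hφs]
        constructor
        · intro hadj2
          exfalso
          have hij : i ≠ j := by
            intro h; subst h; exact G.loopless.irrefl _ hadj2
          exact hind _ (hmem i) _ (hmem j)
            (fun h => hij (e.injective (Subtype.ext h))) hadj2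
        · rintro ⟨-, h | h⟩ <;> exact absurd h (Fin.succ_ne_zero _)
  exact hstar.false ⟨⟨φ, hinj⟩, fun {a b} => hiff a b⟩

lemma no_tilde {t : ℕ} {G : SimpleGraph V} (htilde : IsEmpty (tildeK t ↪g G))
    (v : V) (A B : Finset V) (hA : A.card = t) (hB : B.card = t)
    (hcl : ∀ p ∈ A ∪ B, ∀ q ∈ A ∪ B, p ≠ q → G.Adj p q)
    (hvA : ∀ a ∈ A, G.Adj v a)
    (hvB : ∀ b ∈ B, ¬ G.Adj v b) (hvB' : v ∉ B) : False := by
  have hvA' : v ∉ A := fun h => G.loopless.irrefl v (hvA v h)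
  have hAB : ∀ x, x ∈ A → x ∈ B → False := fun x hxA hxB => hvB x hxB (hvA x hxA)
  have eA := (Finset.equivFinOfCardEq hA).symm
  have eB := (Finset.equivFinOfCardEq hB).symm
  set ψ : Fin (2*t+1) → V := fun i =>
    if h : i.val < t then ((eA ⟨i.val, h⟩ : A) : V)
    else if h' : i.val < 2*t then ((eB ⟨i.val - t, by omega⟩ : B) : V)
    else v with hψ
  have hcase : ∀ i : Fin (2*t+1),
      (i.val < t ∧ ψ i ∈ A) ∨ ((t ≤ i.val ∧ i.val < 2*t) ∧ ψ i ∈ B) ∨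
      (i.val = 2*t ∧ ψ i = v) := by
    intro i
    by_cases h : i.val < t
    · exact Or.inl ⟨h, by simp [hψ, h, Finset.coe_mem]⟩
    · by_cases h' : i.val < 2*t
      · exact Or.inr (Or.inl ⟨⟨by omega, h'⟩, by simp [hψ, h, h', Finset.coe_mem]⟩)
      · exact Or.inr (Or.inr ⟨by omega, by simp [hψ, h, h']⟩)
  -- injectivity
  have hinjA : ∀ i j (hi : i < t) (hj : j < t), ((eA ⟨i, hi⟩ : A) : V) = ((eA ⟨j, hj⟩ : A) : V) → i = j := by
    intro i j hi hj h
    have := eA.injective (Subtype.ext h)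
    simpa using congrArg Fin.val this
  have hinjB : ∀ i j (hi : i < t) (hj : j < t), ((eB ⟨i, hi⟩ : B) : V) = ((eB ⟨j, hj⟩ : B) : V) → i = j := by
    intro i j hi hj h
    have := eB.injective (Subtype.ext h)
    simpa using congrArg Fin.val this
  have hinj : Function.Injective ψ := by
    intro a b hab
    apply Fin.ext
    rcases hcase a with ⟨ha, hma⟩ | ⟨ha, hma⟩ | ⟨ha, hma⟩ <;>
      rcases hcase b with ⟨hb, hmb⟩ | ⟨hb, hmb⟩ | ⟨hb, hmb⟩
    · simp only [hψ, dif_pos ha, dif_pos hb] at hab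
      exact hinjA _ _ ha hb hab
    · exact absurd hmb (fun h => hAB _ (hab ▸ hma) h)
    · exfalso; rw [hab, hmb] at hma; exact hvA' hma
    · exact absurd hma (fun h => hAB _ (hab.symm ▸ hmb) h)
    · simp only [hψ, dif_neg (show ¬ a.val < t by omega), dif_pos hb.2,
        dif_neg (show ¬ b.val < t by omega)] at hab
      rw [dif_pos ha.2] at hab
      have := hinjB _ _ (by omega) (by omega) hab
      omega
    · exfalso; rw [hab, hmb] at hma; exact hvB' hma
    · exfalso; rw [← hab, hma] at hmb; exact hvA' hmb
    · exfalso; rw [← hab, hma] at hmb; exact hvB' hmb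
    · omega
  have hiff : ∀ a b : Fin (2*t+1), G.Adj (ψ a) (ψ b) ↔ (tildeK t).Adj a b := by
    intro a b
    simp only [tildeK, SimpleGraph.fromRel_adj]
    have hne_val : a ≠ b ↔ a.val ≠ b.val := by
      constructor
      · intro h hv; exact h (Fin.ext hv)
      · intro hv h; exact hv (congrArg Fin.val h)
    rcases hcase a with ⟨ha, hma⟩ | ⟨ha, hma⟩ | ⟨ha, hma⟩ <;>
      rcases hcase b with ⟨hb, hmb⟩ | ⟨hb, hmb⟩ | ⟨hb, hmb⟩
    -- both in the clique part (4 cases)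
    · constructor
      · intro h
        refine ⟨fun hh => G.loopless.irrefl _ (hh ▸ h), Or.inl (Or.inl ⟨by omega, by omega⟩)⟩
      · rintro ⟨hne, -⟩
        exact hcl _ (mem_union_left _ hma) _ (mem_union_left _ hmb) (hinj.ne hne)
    · constructor
      · intro h
        refine ⟨fun hh => G.loopless.irrefl _ (hh ▸ h), Or.inl (Or.inl ⟨by omega, by omega⟩)⟩
      · rintro ⟨hne, -⟩
        exact hcl _ (mem_union_left _ hma) _ (mem_union_right _ hmb) (hinj.ne hne)
    -- a in A, b apex
    · rw [hmb]
      constructor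
      · intro h
        exact ⟨by rw [hne_val]; omega, Or.inr (Or.inr ⟨hb, ha⟩)⟩
      · intro _
        exact ((hvA _ hma)).symm
    · constructor
      · intro h
        refine ⟨fun hh => G.loopless.irrefl _ (hh ▸ h), Or.inl (Or.inl ⟨by omega, by omega⟩)⟩
      · rintro ⟨hne, -⟩
        exact hcl _ (mem_union_right _ hma) _ (mem_union_left _ hmb) (hinj.ne hne)
    · constructor
      · intro h
        refine ⟨fun hh => G.loopless.irrefl _ (hh ▸ h), Or.inl (Or.inl ⟨by omega, by omega⟩)⟩
      · rintro ⟨hne, -⟩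
        exact hcl _ (mem_union_right _ hma) _ (mem_union_right _ hmb) (hinj.ne hne)
    -- a in B, b apex
    · rw [hmb]
      constructor
      · intro h
        exact absurd h.symm (hvB _ hma)
      · rintro ⟨hne, (h | h) | (h | h)⟩ <;> omega
    -- a apex, b in A
    · rw [hma]
      constructor
      · intro h
        exact ⟨by rw [hne_val]; omega, Or.inl (Or.inr ⟨ha, hb⟩)⟩
      · intro _
        exact hvA _ hmb
    -- a apex, b in B
    · rw [hma]
      constructor
      · intro h
        exact absurd h (hvB _ hmb)
      · rintro ⟨hne, (h | h) | (h | h)⟩ <;> omega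
    -- both apex
    · rw [hma, hmb]
      constructor
      · intro h; exact absurd rfl (G.ne_of_adj h)
      · rintro ⟨hne, -⟩; exact absurd (Fin.ext (by omega : a.val = b.val)) hne
  exact htilde.false ⟨⟨ψ, hinj⟩, fun {a b} => hiff a b⟩

/-- Crude Ramsey numbers. -/
def Ram : ℕ → ℕ → ℕ
  | 0, _ => 0
  | _+1, 0 => 0
  | a+1, b+1 => Ram a (b+1) + Ram (a+1) b + 1

lemma ramsey (G : SimpleGraph V) (a b : ℕ) : ∀ (S : Finset V), Ram a b ≤ S.card →
    (∃ T ⊆ S, T.card = a ∧ G.IsClique ↑T) ∨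
    (∃ T ⊆ S, T.card = b ∧ ∀ u ∈ T, ∀ w ∈ T, u ≠ w → ¬ G.Adj u w) := by
  induction a generalizing b with
  | zero => intro S _; exact Or.inl ⟨∅, empty_subset _, card_empty, by simp [SimpleGraph.IsClique]⟩
  | succ a iha =>
    induction b with
    | zero => intro S _; exact Or.inr ⟨∅, empty_subset _, card_empty, by simp⟩
    | succ b ihb =>
      intro S hS
      have hpos : 0 < S.card := lt_of_lt_of_le (by simp [Ram]) hS
      obtain ⟨v, hv⟩ := Finset.card_pos.mp hpos
      set N := (S.erase v).filter (fun u => G.Adj v u) with hN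
      set M := (S.erase v).filter (fun u => ¬ G.Adj v u) with hM
      have hNS : N ⊆ S := (filter_subset _ _).trans (erase_subset _ _)
      have hMS : M ⊆ S := (filter_subset _ _).trans (erase_subset _ _)
      have hcard : N.card + M.card = S.card - 1 := by
        rw [hN, hM, Finset.card_filter_add_card_filter_not]
        exact Finset.card_erase_of_mem hv
      have key : Ram a (b+1) ≤ N.card ∨ Ram (a+1) b ≤ M.card := by
        by_contra h
        push_neg at h
        simp only [Ram] at hS
        omega
      rcases key with hk | hk
      · rcases iha (b+1) N hk with ⟨T, hTs, hTc, hTcl⟩ | ⟨T, hTs, hTc, hTi⟩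
        · refine Or.inl ⟨insert v T, insert_subset hv (hTs.trans hNS), ?_, ?_⟩
          · rw [card_insert_of_notMem, hTc]
            intro hvT
            exact (mem_erase.mp (mem_filter.mp (hTs hvT)).1).1 rfl
          · rw [coe_insert]
            exact hTcl.insert (fun u hu _ => (mem_filter.mp (hTs hu)).2)
        · exact Or.inr ⟨T, hTs.trans hNS, hTc, hTi⟩
      · rcases ihb M hk with ⟨T, hTs, hTc, hTcl⟩ | ⟨T, hTs, hTc, hTi⟩
        · exact Or.inl ⟨T, hTs.trans hMS, hTc, hTcl⟩
        · refine Or.inr ⟨insert v T, insert_subset hv (hTs.trans hMS), ?_, ?_⟩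
          · rw [card_insert_of_notMem, hTc]
            intro hvT
            exact (mem_erase.mp (mem_filter.mp (hTs hvT)).1).1 rfl
          · intro p hp q hq hpq
            have hsym : ∀ r ∈ T, ¬ G.Adj v r := fun r hr => (mem_filter.mp (hTs hr)).2
            rcases mem_insert.mp hp with hp1 | hp1 <;> rcases mem_insert.mp hq with hq1 | hq1
            · exact absurd (hp1.trans hq1.symm) hpq
            · rw [hp1]; exact hsym q hq1
            · rw [hq1]; intro hadj; exact hsym p hp1 hadj.symm
            · exact hTi p hp1 q hq1 hpq

/-- Greedy clique picking in a set with small non-neighbourhoods. -/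
lemma greedy_clique (G : SimpleGraph V) (d : ℕ) :
    ∀ (m : ℕ) (S : Finset V),
    (∀ u ∈ S, ((S.filter (fun w => w ≠ u ∧ ¬ G.Adj u w)).card < d)) →
    m + m * d ≤ S.card →
    ∃ T ⊆ S, T.card = m ∧ G.IsClique ↑T := by
  intro m
  induction m with
  | zero => intro S _ _; exact ⟨∅, empty_subset _, card_empty, by simp [SimpleGraph.IsClique]⟩
  | succ m ih =>
    intro S hsmall hcard
    have hpos : 0 < S.card := by omega
    obtain ⟨u, hu⟩ := Finset.card_pos.mp hpos
    set S' := S.filter (fun w => G.Adj u w) with hS'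
    have hsub : S' ⊆ S := filter_subset _ _
    have hcard' : m + m * d ≤ S'.card := by
      have : S ⊆ S' ∪ (S.filter (fun w => w ≠ u ∧ ¬ G.Adj u w)) ∪ {u} := by
        intro x hx
        simp only [mem_union, mem_filter, mem_singleton, hS']
        by_cases hxu : x = u
        · tauto
        · by_cases hadj : G.Adj u x <;> tauto
      have hle := (card_le_card this).trans ((card_union_le _ _).trans
        (Nat.add_le_add (card_union_le _ _) le_rfl))
      have := hsmall u hu
      have hmd : (m+1) * d = m * d + d := by ring
      simp only [card_singleton] at hle
      omega
    obtain ⟨T, hTs, hTc, hTcl⟩ := ih S' (fun w hw => by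
      refine lt_of_le_of_lt (card_le_card ?_) (hsmall w (hsub hw))
      intro x hx
      simp only [mem_filter] at hx ⊢
      exact ⟨hsub hx.1, hx.2⟩) hcard'
    refine ⟨insert u T, insert_subset hu (hTs.trans hsub), ?_, ?_⟩
    · rw [card_insert_of_notMem, hTc]
      intro huT
      exact (G.loopless.irrefl u) (mem_filter.mp (hTs huT)).2
    · rw [coe_insert]
      exact hTcl.insert (fun w hw _ => (mem_filter.mp (hTs hw)).2)


section Main
variable {t : ℕ} {G : SimpleGraph V}

/-- non-neighbours of `v` inside `C` (excluding `v` itself). -/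
noncomputable def nnb (G : SimpleGraph V) (C : Finset V) (v : V) : Finset V :=
  C.filter (fun u => u ≠ v ∧ ¬ G.Adj v u)

/-- neighbours of `v` inside `C`. -/
noncomputable def nbr (G : SimpleGraph V) (C : Finset V) (v : V) : Finset V :=
  C.filter (fun u => G.Adj v u)

/-- the quasi-clique closure of a clique `C`. -/
noncomputable def Qset (G : SimpleGraph V) (t : ℕ) (C : Finset V) : Finset V :=
  Finset.univ.filter (fun v => (nnb G C v).card < t)

def IsMaxCl (G : SimpleGraph V) (C : Finset V) : Prop :=
  G.IsClique ↑C ∧ ∀ w ∉ C, ¬ G.IsClique ↑(insert w C : Finset V)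

lemma adj_of_not_nnb {C : Finset V} {v u : V} (hu : u ∈ C) (hne : u ≠ v)
    (h : u ∉ nnb G C v) : G.Adj v u := by
  by_contra hadj
  exact h (mem_filter.mpr ⟨hu, hne, hadj⟩)

lemma mem_Qset {v : V} {C : Finset V} : v ∈ Qset G t C ↔ (nnb G C v).card < t := by
  simp [Qset]

lemma clique_subset_Qset (ht : 0 < t) {C : Finset V} (hC : G.IsClique ↑C) :
    C ⊆ Qset G t C := by
  intro v hv
  rw [mem_Qset]
  have : nnb G C v = ∅ := by
    rw [Finset.eq_empty_iff_forall_notMem]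
    intro u hu
    rw [nnb, mem_filter] at hu
    exact hu.2.2 (hC hv (hu.1 : u ∈ C) (fun h => hu.2.1 (h.symm)))
  simp [this, ht]

lemma exists_maxcl {C : Finset V} (hC : G.IsClique ↑C) :
    ∃ D, C ⊆ D ∧ IsMaxCl G D := by
  classical
  obtain ⟨D, hD, hmax⟩ := Finset.exists_max_image
    (Finset.univ.filter (fun D => C ⊆ D ∧ G.IsClique ↑D)) Finset.card
    ⟨C, by simp [hC]⟩
  rw [mem_filter] at hD
  refine ⟨D, hD.2.1, hD.2.2, ?_⟩
  intro w hw hcl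
  have hmem : insert w D ∈ Finset.univ.filter (fun D' => C ⊆ D' ∧ G.IsClique ↑D') := by
    rw [mem_filter]
    exact ⟨mem_univ _, hD.2.1.trans (subset_insert _ _), by rwa [coe_insert] at hcl ⊢⟩
  have := hmax _ hmem
  rw [card_insert_of_notMem hw] at this
  omega

lemma maxcl_nonadj {C : Finset V} (hC : IsMaxCl G C) {w : V} (hw : w ∉ C) :
    ∃ u ∈ C, u ≠ w ∧ ¬ G.Adj w u := by
  by_contra h
  push_neg at h
  refine hC.2 w hw ?_
  rw [coe_insert]
  refine hC.1.insert ?_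
  intro u hu hne
  exact h u hu (fun he => hne he.symm)

/-- "C1": a vertex cannot have both `t` neighbours and `t` non-neighbours in a clique. -/
lemma C1 {C : Finset V} (hC : G.IsClique ↑C)
    (htilde : IsEmpty (tildeK t ↪g G)) (v : V)
    (hnbr : t ≤ (nbr G C v).card) (hnnb : t ≤ (nnb G C v).card) : False := by
  obtain ⟨A, hAs, hAc⟩ := Finset.exists_subset_card_eq hnbr
  obtain ⟨B, hBs, hBc⟩ := Finset.exists_subset_card_eq hnnb
  refine no_tilde htilde v A B hAc hBc ?_ ?_ ?_ ?_
  · intro p hp q hq hpq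
    have hpC : p ∈ C := by
      rcases mem_union.mp hp with h | h
      · exact (mem_filter.mp (hAs h)).1
      · exact (mem_filter.mp (hBs h)).1
    have hqC : q ∈ C := by
      rcases mem_union.mp hq with h | h
      · exact (mem_filter.mp (hAs h)).1
      · exact (mem_filter.mp (hBs h)).1
    exact hC hpC hqC hpq
  · intro a ha; exact (mem_filter.mp (hAs ha)).2
  · intro b hb; exact (mem_filter.mp (hBs hb)).2.2
  · intro hv; exact (mem_filter.mp (hBs hv)).2.1 rfl

noncomputable def d0 (t : ℕ) : ℕ := Ram t t
noncomputable def pp (t : ℕ) : ℕ := (t+1)*(d0 t + 3)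
noncomputable def ss (t : ℕ) : ℕ := 2*t*t + t * pp t + 8*t + 8

lemma d0_pos (ht : 3 ≤ t) : 0 < d0 t := by
  obtain ⟨a, ha⟩ : ∃ a, t = a + 1 := ⟨t-1, by omega⟩
  subst ha
  rw [d0]
  simp [Ram]

lemma card_biUnion_nnb_le {T : Finset V} {C : Finset V}
    (h : ∀ u ∈ T, (nnb G C u).card ≤ t - 1) :
    (T.biUnion (fun u => nnb G C u)).card ≤ T.card * (t-1) := by
  refine (Finset.card_biUnion_le).trans ?_
  calc ∑ u ∈ T, (nnb G C u).card ≤ T.card • (t-1) :=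
        Finset.sum_le_card_nsmul _ _ _ h
    _ = T.card * (t-1) := by simp

lemma quasi (ht : 3 ≤ t) (hstar : IsEmpty (starG t ↪g G)) (htilde : IsEmpty (tildeK t ↪g G))
    {C : Finset V} (hC : G.IsClique ↑C) (hCc : ss t ≤ C.card)
    {v : V} (hv : v ∈ Qset G t C) :
    (nnb G (Qset G t C) v).card < d0 t := by
  by_contra hbig
  push_neg at hbig
  have hQmem : ∀ u ∈ nnb G (Qset G t C) v, u ∈ Qset G t C ∧ u ≠ v ∧ ¬ G.Adj v u :=
    fun u hu => by
      have := mem_filter.mp hu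
      exact ⟨this.1, this.2⟩
  have hnnbC : ∀ u ∈ Qset G t C, (nnb G C u).card ≤ t - 1 := by
    intro u hu
    have := mem_Qset.mp hu
    omega
  obtain (⟨T, hTs, hTc, hTcl⟩ | ⟨T, hTs, hTc, hTi⟩) := ramsey G t t _ hbig
  · -- clique case: K̃_{2t}
    have hTQ : ∀ u ∈ T, u ∈ Qset G t C := fun u hu => (hQmem u (hTs hu)).1
    set bad2 : Finset V := insert v ((T ∪ T.biUnion (fun u => nnb G C u)) ∪ nnb G C v) with hbad2
    have hbad2c : bad2.card ≤ t*t + t + 1 := by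
      have h1 := card_biUnion_nnb_le (G := G) (C := C) (T := T) (t := t)
        (fun u hu => hnnbC u (hTQ u hu))
      have h2 := hnnbC v hv
      have hu0 : bad2.card ≤ ((T ∪ T.biUnion (fun u => nnb G C u)) ∪ nnb G C v).card + 1 := by
        rw [hbad2]; exact card_insert_le _ _
      have hu1 := card_union_le (T ∪ T.biUnion (fun u => nnb G C u)) (nnb G C v)
      have hu2 := card_union_le T (T.biUnion (fun u => nnb G C u))
      obtain ⟨a, rfl⟩ : ∃ a, t = a+1 := ⟨t-1, by omega⟩
      rw [hTc] at h1
      simp only [Nat.add_sub_cancel] at h1 h2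
      nlinarith
    have hCbig : t ≤ (C \ bad2).card := by
      have := Finset.card_le_card_sdiff_add_card (s := C) (t := bad2)
      have hss : t*t + t + 1 + t ≤ ss t := by
        rw [ss, pp, d0]
        nlinarith
      omega
    obtain ⟨Tc, hTcs, hTcc⟩ := Finset.exists_subset_card_eq hCbig
    have hTcC : ∀ c ∈ Tc, c ∈ C := fun c hc => (mem_sdiff.mp (hTcs hc)).1
    have hTcbad : ∀ c ∈ Tc, c ∉ bad2 := fun c hc => (mem_sdiff.mp (hTcs hc)).2
    refine no_tilde htilde v Tc T hTcc hTc ?_ ?_ ?_ ?_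
    · intro p hp q hq hpq
      rcases mem_union.mp hp with hp1 | hp1 <;> rcases mem_union.mp hq with hq1 | hq1
      · exact hC (hTcC p hp1) (hTcC q hq1) hpq
      · -- p ∈ Tc, q ∈ T
        have : p ∉ nnb G C q := fun h => hTcbad p hp1 (by
          rw [hbad2]; exact mem_insert_of_mem (mem_union_left _ (mem_union_right _
            (mem_biUnion.mpr ⟨q, hq1, h⟩))))
        exact (adj_of_not_nnb (hTcC p hp1) hpq this).symm
      · have : q ∉ nnb G C p := fun h => hTcbad q hq1 (by
          rw [hbad2]; exact mem_insert_of_mem (mem_union_left _ (mem_union_right _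
            (mem_biUnion.mpr ⟨p, hp1, h⟩))))
        exact adj_of_not_nnb (hTcC q hq1) (fun h => hpq h.symm) this
      · exact hTcl hp1 hq1 hpq
    · intro c hc
      refine adj_of_not_nnb (hTcC c hc) ?_ ?_
      · intro h; exact hTcbad c hc (by rw [hbad2, h]; exact mem_insert_self _ _)
      · intro h; exact hTcbad c hc (by rw [hbad2]; exact mem_insert_of_mem (mem_union_right _ h))
    · intro u hu; exact (hQmem u (hTs hu)).2.2
    · intro hvT; exact (hQmem v (hTs hvT)).2.1 rfl
  · -- independent case : K_{1,t}
    set bad : Finset V := T ∪ T.biUnion (fun u => nnb G C u) with hbad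
    have hTQ : ∀ u ∈ T, u ∈ Qset G t C := fun u hu => (hQmem u (hTs hu)).1
    have hbadc : bad.card ≤ t + t*(t-1) := by
      have h1 := card_biUnion_nnb_le (G := G) (C := C) (T := T) (t := t)
        (fun u hu => hnnbC u (hTQ u hu))
      calc bad.card ≤ T.card + (T.biUnion (fun u => nnb G C u)).card := card_union_le _ _
        _ ≤ t + t*(t-1) := by rw [hTc] at *; omega
    have hCbig : 1 ≤ (C \ bad).card := by
      have := Finset.card_le_card_sdiff_add_card (s := C) (t := bad)
      have hss : t + t*(t-1) + 1 ≤ ss t := by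
        obtain ⟨a, rfl⟩ : ∃ a, t = a+1 := ⟨t-1, by omega⟩
        rw [ss, pp]
        simp only [Nat.add_sub_cancel]
        nlinarith [Nat.zero_le (d0 (a+1)), Nat.zero_le ((a+1)*((a+1+1)*(d0 (a+1)+3)))]
      omega
    obtain ⟨c, hc⟩ := Finset.card_pos.mp hCbig
    have hcC : c ∈ C := (mem_sdiff.mp hc).1
    have hcbad : c ∉ bad := (mem_sdiff.mp hc).2
    refine no_star hstar c T hTc ?_ hTi
    intro u hu
    have hcu : c ≠ u := fun h => hcbad (by rw [hbad, h]; exact mem_union_left _ hu)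
    have : c ∉ nnb G C u := fun h => hcbad (by
      rw [hbad]; exact mem_union_right _ (mem_biUnion.mpr ⟨u, hu, h⟩))
    exact (adj_of_not_nnb hcC hcu this).symm

lemma R3aux (ht : 3 ≤ t) (hstar : IsEmpty (starG t ↪g G)) (htilde : IsEmpty (tildeK t ↪g G))
    {C D : Finset V} (hCm : IsMaxCl G C) (hDm : IsMaxCl G D)
    (hCc : ss t ≤ C.card) (hDc : ss t ≤ D.card)
    (hI : pp t < ((Qset G t C) ∩ (Qset G t D)).card) :
    Qset G t C ⊆ Qset G t D := by
  intro v hv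
  by_contra hvD
  rw [mem_Qset, not_lt] at hvD
  have hvnD : v ∉ D := by
    intro h
    have := clique_subset_Qset (t := t) (G := G) (by omega) hDm.1 h
    rw [mem_Qset] at this
    omega
  have hnbrD : (nbr G D v).card < t := by
    by_contra h
    push_neg at h
    exact C1 hDm.1 htilde v h hvD
  -- neighbours of v inside the intersection
  set I := (Qset G t C) ∩ (Qset G t D) with hIdef
  set NI := I.filter (fun u => G.Adj v u) with hNI
  have hquasiC := quasi (G := G) ht hstar htilde hCm.1 hCc hv
  have hIsub : I ⊆ NI ∪ (nnb G (Qset G t C) v ∪ {v}) := by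
    intro u hu
    by_cases hadj : G.Adj v u
    · exact mem_union_left _ (mem_filter.mpr ⟨hu, hadj⟩)
    · by_cases huv : u = v
      · exact mem_union_right _ (mem_union_right _ (by simp [huv]))
      · refine mem_union_right _ (mem_union_left _ ?_)
        exact mem_filter.mpr ⟨(mem_inter.mp hu).1, huv, hadj⟩
  have hNIc : t + t * d0 t ≤ NI.card := by
    have h1 := card_le_card hIsub
    have h2 := card_union_le NI (nnb G (Qset G t C) v ∪ {v})
    have h3 := card_union_le (nnb G (Qset G t C) v) ({v} : Finset V)
    have h4 : ({v} : Finset V).card = 1 := card_singleton v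
    rw [pp] at hI
    nlinarith [Nat.zero_le (d0 t)]
  -- greedy clique inside NI
  obtain ⟨T, hTs, hTc, hTcl⟩ := greedy_clique G (d0 t) t NI (by
    intro u hu
    have huC : u ∈ Qset G t C := (mem_inter.mp (mem_filter.mp hu).1).1
    refine lt_of_le_of_lt (card_le_card ?_) (quasi ht hstar htilde hCm.1 hCc huC)
    intro w hw
    rw [mem_filter] at hw
    rw [nnb, mem_filter]
    exact ⟨(mem_inter.mp (mem_filter.mp hw.1).1).1, hw.2⟩) hNIc
  have hTQD : ∀ u ∈ T, u ∈ Qset G t D := fun u hu =>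
    (mem_inter.mp (mem_filter.mp (hTs hu)).1).2
  have hTadj : ∀ u ∈ T, G.Adj v u := fun u hu => (mem_filter.mp (hTs hu)).2
  have hTnnb : ∀ u ∈ T, (nnb G D u).card ≤ t - 1 := by
    intro u hu
    have := mem_Qset.mp (hTQD u hu)
    omega
  -- pick the non-neighbour side inside D
  set bad3 : Finset V := insert v ((T ∪ T.biUnion (fun u => nnb G D u)) ∪ nbr G D v) with hbad3
  have hbad3c : bad3.card ≤ t*t + t + 1 := by
    have h1 := card_biUnion_nnb_le (G := G) (C := D) (T := T) (t := t) hTnnb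
    have hu0 : bad3.card ≤ ((T ∪ T.biUnion (fun u => nnb G D u)) ∪ nbr G D v).card + 1 := by
      rw [hbad3]; exact card_insert_le _ _
    have hu1 := card_union_le (T ∪ T.biUnion (fun u => nnb G D u)) (nbr G D v)
    have hu2 := card_union_le T (T.biUnion (fun u => nnb G D u))
    obtain ⟨a, rfl⟩ : ∃ a, t = a+1 := ⟨t-1, by omega⟩
    rw [hTc] at h1
    simp only [Nat.add_sub_cancel] at h1
    nlinarith
  have hDbig : t ≤ (D \ bad3).card := by
    have := Finset.card_le_card_sdiff_add_card (s := D) (t := bad3)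
    have hss : t*t + t + 1 + t ≤ ss t := by
      rw [ss, pp, d0]
      nlinarith
    omega
  obtain ⟨B, hBs, hBc⟩ := Finset.exists_subset_card_eq hDbig
  have hBD : ∀ b ∈ B, b ∈ D := fun b hb => (mem_sdiff.mp (hBs hb)).1
  have hBbad : ∀ b ∈ B, b ∉ bad3 := fun b hb => (mem_sdiff.mp (hBs hb)).2
  refine no_tilde htilde v T B hTc hBc ?_ ?_ ?_ ?_
  · intro p hp q hq hpq
    rcases mem_union.mp hp with hp1 | hp1 <;> rcases mem_union.mp hq with hq1 | hq1
    · exact hTcl hp1 hq1 hpq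
    · -- p ∈ T, q ∈ B
      have hqn : q ∉ nnb G D p := fun h => hBbad q hq1 (by
        rw [hbad3]; exact mem_insert_of_mem (mem_union_left _ (mem_union_right _
          (mem_biUnion.mpr ⟨p, hp1, h⟩))))
      exact adj_of_not_nnb (hBD q hq1) (fun h => hpq h.symm) hqn
    · have hpn : p ∉ nnb G D q := fun h => hBbad p hp1 (by
        rw [hbad3]; exact mem_insert_of_mem (mem_union_left _ (mem_union_right _
          (mem_biUnion.mpr ⟨q, hq1, h⟩))))
      exact (adj_of_not_nnb (hBD p hp1) hpq hpn).symm
    · exact hDm.1 (hBD p hp1) (hBD q hq1) hpq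
  · exact hTadj
  · intro b hb
    intro hadj
    exact hBbad b hb (by
      rw [hbad3]
      exact mem_insert_of_mem (mem_union_right _ (mem_filter.mpr ⟨hBD b hb, hadj⟩)))
  · intro hvB
    exact hvnD (hBD v hvB)

lemma R3 (ht : 3 ≤ t) (hstar : IsEmpty (starG t ↪g G)) (htilde : IsEmpty (tildeK t ↪g G))
    {C D : Finset V} (hCm : IsMaxCl G C) (hDm : IsMaxCl G D)
    (hCc : ss t ≤ C.card) (hDc : ss t ≤ D.card)
    (hI : pp t < ((Qset G t C) ∩ (Qset G t D)).card) :
    Qset G t C = Qset G t D := by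
  refine Finset.Subset.antisymm
    (R3aux ht hstar htilde hCm hDm hCc hDc hI)
    (R3aux ht hstar htilde hDm hCm hDc hCc (by rwa [inter_comm]))

/-- The family of quasi-cliques coming from big maximal cliques. -/
noncomputable def QFam (G : SimpleGraph V) (t : ℕ) : Finset (Finset V) :=
  Finset.univ.filter (fun Q => ∃ C : Finset V, IsMaxCl G C ∧ ss t ≤ C.card ∧ Q = Qset G t C)

/-- a choice of witness clique -/
noncomputable def wcl (G : SimpleGraph V) (t : ℕ) (Q : Finset V) : Finset V :=
  if h : ∃ C : Finset V, IsMaxCl G C ∧ ss t ≤ C.card ∧ Q = Qset G t C then h.choose else ∅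

lemma wcl_spec {Q : Finset V} (hQ : Q ∈ QFam G t) :
    IsMaxCl G (wcl G t Q) ∧ ss t ≤ (wcl G t Q).card ∧ Q = Qset G t (wcl G t Q) := by
  rw [QFam, mem_filter] at hQ
  rw [wcl, dif_pos hQ.2]
  exact hQ.2.choose_spec

lemma QFam_inter (ht : 3 ≤ t) (hstar : IsEmpty (starG t ↪g G))
    (htilde : IsEmpty (tildeK t ↪g G)) {Q Q' : Finset V}
    (hQ : Q ∈ QFam G t) (hQ' : Q' ∈ QFam G t) (hne : Q ≠ Q') :
    (Q ∩ Q').card ≤ pp t := by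
  by_contra h
  push_neg at h
  obtain ⟨h1, h2, h3⟩ := wcl_spec (G := G) (t := t) hQ
  obtain ⟨h1', h2', h3'⟩ := wcl_spec (G := G) (t := t) hQ'
  refine hne ?_
  rw [h3, h3']
  refine R3 ht hstar htilde h1 h1' h2 h2' ?_
  rw [← h3, ← h3']
  exact h

/-- R2 : every vertex lies in fewer than `t` members of the family. -/
lemma R2 (ht : 3 ≤ t) (hstar : IsEmpty (starG t ↪g G))
    (htilde : IsEmpty (tildeK t ↪g G)) (v : V) :
    (((QFam G t)).filter (fun Q => v ∈ Q)).card < t := by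
  by_contra hbig
  push_neg at hbig
  obtain ⟨F, hFs, hFc⟩ := Finset.exists_subset_card_eq hbig
  have hFmem : ∀ Q ∈ F, Q ∈ QFam G t ∧ v ∈ Q := fun Q hQ => by
    have := hFs hQ; rw [mem_filter] at this; exact this
  -- the "private" part of each member
  set XQ : Finset V → Finset V := fun Q =>
    (wcl G t Q).filter (fun u => G.Adj v u ∧ ∀ Q' ∈ F, Q' ≠ Q → u ∉ Q') with hXQ
  have hXQcard : ∀ Q ∈ F, ss t - (t + (t-1) * pp t) ≤ (XQ Q).card := by
    intro Q hQ
    obtain ⟨hw1, hw2, hw3⟩ := wcl_spec (G := G) (t := t) (hFmem Q hQ).1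
    have hsub : wcl G t Q ⊆ XQ Q ∪ ((nnb G (wcl G t Q) v ∪ {v}) ∪
        (F.erase Q).biUnion (fun Q' => Q' ∩ Q)) := by
      intro u hu
      by_cases hX : u ∈ XQ Q
      · exact mem_union_left _ hX
      · refine mem_union_right _ ?_
        rw [hXQ] at hX
        simp only [mem_filter, not_and, not_forall] at hX
        by_cases hadj : G.Adj v u
        · have hex := hX hu hadj
          obtain ⟨Q', hQ'F, hQ'ne, hQ'mem⟩ := hex
          rw [not_not] at hQ'mem
          refine mem_union_right _ (mem_biUnion.mpr ⟨Q', mem_erase.mpr ⟨hQ'ne, hQ'F⟩, ?_⟩)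
          refine mem_inter.mpr ⟨hQ'mem, ?_⟩
          rw [hw3]
          exact clique_subset_Qset (t := t) (by omega) hw1.1 hu
        · by_cases huv : u = v
          · exact mem_union_left _ (mem_union_right _ (by simp [huv]))
          · refine mem_union_left _ (mem_union_left _ ?_)
            exact mem_filter.mpr ⟨hu, huv, hadj⟩
    have hb1 : (nnb G (wcl G t Q) v).card ≤ t - 1 := by
      have hvQ : v ∈ Qset G t (wcl G t Q) := by rw [← hw3]; exact (hFmem Q hQ).2
      have := mem_Qset.mp hvQ
      omega
    have hb2 : ((F.erase Q).biUnion (fun Q' => Q' ∩ Q)).card ≤ (t-1) * pp t := by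
      refine (Finset.card_biUnion_le).trans ?_
      have : ∀ Q' ∈ F.erase Q, (Q' ∩ Q).card ≤ pp t := by
        intro Q' hQ'
        have h1 := mem_erase.mp hQ'
        exact QFam_inter ht hstar htilde (hFmem Q' h1.2).1 (hFmem Q hQ).1 h1.1
      refine (Finset.sum_le_card_nsmul _ _ _ this).trans ?_
      rw [smul_eq_mul, card_erase_of_mem hQ, hFc]
    have := card_le_card hsub
    have hu1 := card_union_le (XQ Q) ((nnb G (wcl G t Q) v ∪ {v}) ∪
        (F.erase Q).biUnion (fun Q' => Q' ∩ Q))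
    have hu2 := card_union_le (nnb G (wcl G t Q) v ∪ {v})
        ((F.erase Q).biUnion (fun Q' => Q' ∩ Q))
    have hu3 := card_union_le (nnb G (wcl G t Q) v) ({v} : Finset V)
    have hv1 : ({v} : Finset V).card = 1 := card_singleton v
    omega
  -- grow an independent set of neighbours of v, one from each member of F'
  have main : ∀ F' : Finset (Finset V), F' ⊆ F →
      ∃ T : Finset V, T.card = F'.card ∧ (∀ u ∈ T, G.Adj v u) ∧
        (∀ u ∈ T, ∀ z ∈ T, u ≠ z → ¬ G.Adj u z) ∧
        (∀ u ∈ T, ∃ Q ∈ F', u ∈ XQ Q) := by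
    intro F'
    induction F' using Finset.induction_on with
    | empty => intro _; exact ⟨∅, by simp, by simp, by simp, by simp⟩
    | @insert Q F'' hQnew ih =>
      intro hsub
      obtain ⟨T, hTc, hTadj, hTi, hTw⟩ := ih ((subset_insert _ _).trans hsub)
      have hQF : Q ∈ F := hsub (mem_insert_self _ _)
      obtain ⟨hw1, hw2, hw3⟩ := wcl_spec (G := G) (t := t) (hFmem Q hQF).1
      -- elements of T have few neighbours in (wcl G t Q)
      have hTfew : ∀ z ∈ T, (nbr G (wcl G t Q) z).card ≤ t - 1 := by
        intro z hz
        obtain ⟨Q', hQ'F'', hzX⟩ := hTw z hz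
        have hQ'ne : Q' ≠ Q := fun h => hQnew (h ▸ hQ'F'')
        have hzQ : z ∉ Q := (mem_filter.mp hzX).2.2 Q hQF (fun h => hQ'ne h.symm)
        have hzn : t ≤ (nnb G (wcl G t Q) z).card := by
          by_contra hlt
          push_neg at hlt
          exact hzQ (hw3 ▸ mem_Qset.mpr hlt)
        by_contra hnb
        push_neg at hnb
        exact C1 hw1.1 htilde z (by omega) hzn
      have hic : F''.card + 1 ≤ t := by
        have := card_le_card hsub
        rw [card_insert_of_notMem hQnew, hFc] at this
        omega
      set Y := (XQ Q) \ (T.biUnion (fun z => nbr G (wcl G t Q) z)) with hY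
      have hYc : 1 ≤ Y.card := by
        have h1 := hXQcard Q hQF
        have h2 : (T.biUnion (fun z => nbr G (wcl G t Q) z)).card ≤ (t-1)*(t-1) := by
          refine (Finset.card_biUnion_le).trans ?_
          refine (Finset.sum_le_card_nsmul _ _ (t-1) hTfew).trans ?_
          rw [smul_eq_mul]
          have hTle : T.card ≤ t - 1 := by omega
          exact Nat.mul_le_mul_right _ hTle
        have h3 := Finset.card_le_card_sdiff_add_card (s := XQ Q)
          (t := T.biUnion (fun z => nbr G (wcl G t Q) z))
        have h4 : t + (t-1) * pp t + ((t-1)*(t-1) + 1) ≤ ss t := by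
          obtain ⟨a, rfl⟩ : ∃ a, t = a+1 := ⟨t-1, by omega⟩
          rw [ss]
          simp only [Nat.add_sub_cancel]
          nlinarith [Nat.zero_le (pp (a+1))]
        rw [← hY] at h3
        omega
      obtain ⟨u, hu⟩ := Finset.card_pos.mp hYc
      have huX : u ∈ XQ Q := (mem_sdiff.mp hu).1
      have hunb : u ∉ T.biUnion (fun z => nbr G (wcl G t Q) z) := (mem_sdiff.mp hu).2
      have huw : u ∈ wcl G t Q := (mem_filter.mp huX).1
      have huQ : u ∈ Q := by
        rw [hw3]
        exact clique_subset_Qset (t := t) (by omega) hw1.1 huw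
      have huT : u ∉ T := by
        intro h
        obtain ⟨Q', hQ'F'', hzX⟩ := hTw u h
        have hQ'ne : Q' ≠ Q := fun hh => hQnew (hh ▸ hQ'F'')
        exact (mem_filter.mp hzX).2.2 Q hQF (fun hh => hQ'ne hh.symm) huQ
      have hunadj : ∀ z ∈ T, ¬ G.Adj u z := by
        intro z hz hadj
        exact hunb (mem_biUnion.mpr ⟨z, hz, mem_filter.mpr ⟨huw, hadj.symm⟩⟩)
      refine ⟨insert u T, ?_, ?_, ?_, ?_⟩
      · rw [card_insert_of_notMem huT, hTc, card_insert_of_notMem hQnew]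
      · intro z hz
        rcases mem_insert.mp hz with rfl | hz
        · exact (mem_filter.mp huX).2.1
        · exact hTadj z hz
      · intro z1 hz1 z2 hz2 hne
        rcases mem_insert.mp hz1 with hz1 | hz1 <;> rcases mem_insert.mp hz2 with hz2 | hz2
        · exact absurd (hz1.trans hz2.symm) hne
        · rw [hz1]; exact hunadj z2 hz2
        · rw [hz2]; intro hadj; exact hunadj z1 hz1 hadj.symm
        · exact hTi z1 hz1 z2 hz2 hne
      · intro z hz
        rcases mem_insert.mp hz with rfl | hz
        · exact ⟨Q, mem_insert_self _ _, huX⟩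
        · obtain ⟨Q', hQ', hzX⟩ := hTw z hz
          exact ⟨Q', mem_insert_of_mem hQ', hzX⟩
  obtain ⟨T, hTc, hTadj, hTi, -⟩ := main F (Finset.Subset.refl F)
  rw [hFc] at hTc
  exact no_star hstar v T hTc hTadj hTi

/-- R4 : few edges at each vertex are uncovered by the family. -/
lemma R4 (ht : 3 ≤ t) (hstar : IsEmpty (starG t ↪g G))
    (htilde : IsEmpty (tildeK t ↪g G)) (v : V) :
    ((Finset.univ.filter (fun u => G.Adj v u ∧
      ∀ Q ∈ QFam G t, ¬ (u ∈ Q ∧ v ∈ Q))).card) < Ram (ss t) t := by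
  by_contra hbig
  push_neg at hbig
  obtain (⟨T, hTs, hTc, hTcl⟩ | ⟨T, hTs, hTc, hTi⟩) := ramsey G (ss t) t _ hbig
  · -- big clique through v : contradiction with uncoveredness
    have hTadj : ∀ u ∈ T, G.Adj v u := fun u hu => (mem_filter.mp (hTs hu)).2.1
    have hvT : v ∉ T := fun h => G.loopless.irrefl v (hTadj v h)
    have hclv : G.IsClique ↑(insert v T : Finset V) := by
      rw [coe_insert]
      exact hTcl.insert (fun u hu hne => hTadj u hu)
    obtain ⟨D, hDs, hDm⟩ := exists_maxcl hclv
    have hDc : ss t ≤ D.card := by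
      have h1 := card_le_card hDs
      have h2 : (insert v T).card = ss t + 1 := by
        rw [card_insert_of_notMem hvT, hTc]
      omega
    have hQmem : Qset G t D ∈ QFam G t := by
      rw [QFam, mem_filter]
      exact ⟨mem_univ _, D, hDm, hDc, rfl⟩
    have hTne : T.Nonempty := by
      rw [← Finset.card_pos, hTc]
      have := d0_pos (t := t) ht
      rw [ss]
      omega
    obtain ⟨u, hu⟩ := hTne
    have hvD : v ∈ Qset G t D := clique_subset_Qset (t := t) (by omega) hDm.1
      (hDs (mem_insert_self _ _))
    have huD : u ∈ Qset G t D := clique_subset_Qset (t := t) (by omega) hDm.1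
      (hDs (mem_insert_of_mem hu))
    have hcontra := (mem_filter.mp (hTs hu)).2.2 (Qset G t D) hQmem
    exact hcontra huD hvD
  · -- independent set : star
    exact no_star hstar v T hTc (fun u hu => (mem_filter.mp (hTs hu)).2.1) hTi

/-- edge multiplicity counter -/
noncomputable def Mcnt (G : SimpleGraph V) (t : ℕ) (u w : V) : ℕ :=
  ((QFam G t).filter (fun Q => u ∈ Q ∧ w ∈ Q)).card

lemma Mcnt_symm (u w : V) : Mcnt G t u w = Mcnt G t w u := by
  unfold Mcnt
  congr 1
  apply filter_congr
  intro Q _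
  constructor <;> exact fun h => ⟨h.2, h.1⟩

lemma Mcnt_diag (ht : 3 ≤ t) (hstar : IsEmpty (starG t ↪g G))
    (htilde : IsEmpty (tildeK t ↪g G)) (u : V) : Mcnt G t u u < t := by
  have h := R2 ht hstar htilde u
  refine lt_of_le_of_lt (le_of_eq ?_) h
  unfold Mcnt
  congr 1
  apply filter_congr
  intro Q _
  constructor
  · exact fun h => h.1
  · exact fun h => ⟨h, h⟩

/-- positive semidefiniteness of the multiplicity matrix -/
lemma Mcnt_psd (x : V → ℝ) : 0 ≤ ∑ u, ∑ w, (Mcnt G t u w : ℝ) * (x u * x w) := by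
  have hM : ∀ u w : V, (Mcnt G t u w : ℝ) * (x u * x w)
      = ∑ Q ∈ QFam G t, (if u ∈ Q then x u else 0) * (if w ∈ Q then x w else 0) := by
    intro u w
    unfold Mcnt
    rw [card_filter]
    push_cast
    rw [Finset.sum_mul]
    refine Finset.sum_congr rfl fun Q _ => ?_
    by_cases h1 : u ∈ Q <;> by_cases h2 : w ∈ Q <;> simp [h1, h2] <;> ring
  have step : (∑ Q ∈ QFam G t, (∑ u, (if u ∈ Q then x u else 0))^2)
      = ∑ u, ∑ w, (Mcnt G t u w : ℝ) * (x u * x w) := by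
    have h1 : ∀ Q : Finset V, (∑ u, (if u ∈ Q then x u else 0))^2
        = ∑ u, ∑ w, (if u ∈ Q then x u else 0) * (if w ∈ Q then x w else 0) := by
      intro Q
      rw [sq, Finset.sum_mul_sum]
    simp_rw [h1, hM]
    rw [Finset.sum_comm]
    refine Finset.sum_congr rfl fun u _ => ?_
    rw [Finset.sum_comm]
  rw [← step]
  positivity

lemma count2 (ht : 3 ≤ t) (hstar : IsEmpty (starG t ↪g G))
    (htilde : IsEmpty (tildeK t ↪g G)) (u : V) :
    ∑ w ∈ Finset.univ.erase u, Mcnt G t u w * (Mcnt G t u w - 1) ≤ t * t * pp t := by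
  set Fu := (QFam G t).filter (fun Q => u ∈ Q) with hFu
  have hFuc : Fu.card < t := R2 ht hstar htilde u
  have hMw : ∀ w, Mcnt G t u w = (Fu.filter (fun Q => w ∈ Q)).card := by
    intro w
    unfold Mcnt
    rw [hFu, filter_filter]
  have hoff : ∀ w, Mcnt G t u w * (Mcnt G t u w - 1)
      = ((Fu.offDiag).filter (fun p => w ∈ p.1 ∧ w ∈ p.2)).card := by
    intro w
    rw [hMw]
    have he : (Fu.filter (fun Q => w ∈ Q)).offDiag
        = (Fu.offDiag).filter (fun p => w ∈ p.1 ∧ w ∈ p.2) := by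
      ext ⟨Q, Q'⟩
      simp only [Finset.mem_offDiag, mem_filter]
      tauto
    rw [← he, Finset.offDiag_card]
    generalize (Fu.filter (fun Q => w ∈ Q)).card = m
    cases m with
    | zero => simp
    | succ k =>
      have : (k+1)*(k+1) = (k+1)*k + (k+1) := by ring
      simp only [Nat.add_sub_cancel]
      omega
  calc ∑ w ∈ Finset.univ.erase u, Mcnt G t u w * (Mcnt G t u w - 1)
      = ∑ w ∈ Finset.univ.erase u, ∑ p ∈ Fu.offDiag,
          (if w ∈ p.1 ∧ w ∈ p.2 then 1 else 0) := by
        refine Finset.sum_congr rfl fun w _ => ?_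
        rw [hoff, card_filter]
    _ = ∑ p ∈ Fu.offDiag, ∑ w ∈ Finset.univ.erase u,
          (if w ∈ p.1 ∧ w ∈ p.2 then 1 else 0) := Finset.sum_comm
    _ ≤ ∑ _p ∈ Fu.offDiag, pp t := by
        refine Finset.sum_le_sum fun p hp => ?_
        rw [← card_filter]
        have hsub2 : (Finset.univ.erase u).filter (fun w => w ∈ p.1 ∧ w ∈ p.2)
            ⊆ p.1 ∩ p.2 := by
          intro w hw
          rw [mem_filter] at hw
          exact mem_inter.mpr hw.2
        refine (card_le_card hsub2).trans ?_
        rw [Finset.mem_offDiag] at hp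
        exact QFam_inter ht hstar htilde (mem_filter.mp hp.1).1
          (mem_filter.mp hp.2.1).1 hp.2.2
    _ ≤ t * t * pp t := by
        rw [Finset.sum_const, smul_eq_mul]
        refine Nat.mul_le_mul_right _ ?_
        rw [Finset.offDiag_card]
        exact (Nat.sub_le _ _).trans (Nat.mul_le_mul (le_of_lt hFuc) (le_of_lt hFuc))

lemma count3 (ht : 3 ≤ t) (hstar : IsEmpty (starG t ↪g G))
    (htilde : IsEmpty (tildeK t ↪g G)) (u : V) :
    ∑ w ∈ (Finset.univ.erase u).filter (fun w => ¬ G.Adj u w), Mcnt G t u w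
      ≤ t * d0 t := by
  set Fu := (QFam G t).filter (fun Q => u ∈ Q) with hFu
  have hFuc : Fu.card < t := R2 ht hstar htilde u
  have hMw : ∀ w, Mcnt G t u w = (Fu.filter (fun Q => w ∈ Q)).card := by
    intro w
    unfold Mcnt
    rw [hFu, filter_filter]
  calc ∑ w ∈ (Finset.univ.erase u).filter (fun w => ¬ G.Adj u w), Mcnt G t u w
      = ∑ w ∈ (Finset.univ.erase u).filter (fun w => ¬ G.Adj u w),
          ∑ Q ∈ Fu, (if w ∈ Q then 1 else 0) := by
        refine Finset.sum_congr rfl fun w _ => ?_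
        rw [hMw, card_filter]
    _ = ∑ Q ∈ Fu, ∑ w ∈ (Finset.univ.erase u).filter (fun w => ¬ G.Adj u w),
          (if w ∈ Q then 1 else 0) := Finset.sum_comm
    _ ≤ ∑ _Q ∈ Fu, d0 t := by
        refine Finset.sum_le_sum fun Q hQ => ?_
        rw [← card_filter]
        have hQQ : Q ∈ QFam G t := (mem_filter.mp hQ).1
        have huQ : u ∈ Q := (mem_filter.mp hQ).2
        obtain ⟨hw1, hw2, hw3⟩ := wcl_spec (G := G) (t := t) hQQ
        have hsub2 : ((Finset.univ.erase u).filter (fun w => ¬ G.Adj u w)).filter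
            (fun w => w ∈ Q) ⊆ nnb G Q u := by
          intro w hw
          simp only [mem_filter, mem_erase] at hw
          exact mem_filter.mpr ⟨hw.2, hw.1.1.1, hw.1.2⟩
        refine le_of_lt (lt_of_le_of_lt (card_le_card hsub2) ?_)
        have huQ' : u ∈ Qset G t (wcl G t Q) := hw3 ▸ huQ
        have := quasi ht hstar htilde hw1.1 hw2 huQ'
        rw [← hw3] at this
        exact this
    _ ≤ t * d0 t := by
        rw [Finset.sum_const, smul_eq_mul]
        exact Nat.mul_le_mul_right _ (le_of_lt hFuc)

noncomputable def Wb (t : ℕ) : ℕ := t + Ram (ss t) t + t*t*pp t + t*d0 t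

lemma row_bound (ht : 3 ≤ t) (hstar : IsEmpty (starG t ↪g G))
    (htilde : IsEmpty (tildeK t ↪g G)) (u : V) :
    ∑ w, |(if G.Adj u w then (1:ℝ) else 0) - (Mcnt G t u w : ℝ)| ≤ (Wb t : ℝ) := by
  -- the natural-number bound function
  set g : V → ℕ := fun w =>
    if w = u then Mcnt G t u u
    else if G.Adj u w then
      (if Mcnt G t u w = 0 then 1 else Mcnt G t u w * (Mcnt G t u w - 1))
    else Mcnt G t u w with hg
  have hpt : ∀ w, |(if G.Adj u w then (1:ℝ) else 0) - (Mcnt G t u w : ℝ)| ≤ (g w : ℝ) := by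
    intro w
    simp only [hg]
    by_cases hwu : w = u
    · subst hwu
      simp only [if_pos rfl]
      rw [if_neg (G.loopless.irrefl w)]
      simp [abs_of_nonpos]
    · rw [if_neg hwu]
      by_cases hadj : G.Adj u w
      · rw [if_pos hadj, if_pos hadj]
        by_cases hM : Mcnt G t u w = 0
        · rw [if_pos hM, hM]
          simp
        · rw [if_neg hM]
          have h1 : 1 ≤ Mcnt G t u w := Nat.one_le_iff_ne_zero.mpr hM
          have h1r : (1:ℝ) ≤ (Mcnt G t u w : ℝ) := by exact_mod_cast h1
          rw [abs_of_nonpos (by linarith)]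
          have hcast : ((Mcnt G t u w * (Mcnt G t u w - 1) : ℕ) : ℝ)
              = (Mcnt G t u w : ℝ) * ((Mcnt G t u w : ℝ) - 1) := by
            push_cast [Nat.cast_sub h1]
            ring
          rw [hcast]
          nlinarith
      · rw [if_neg hadj, if_neg hadj]
        simp [abs_of_nonpos]
  refine (Finset.sum_le_sum (fun w _ => hpt w)).trans ?_
  rw [← Nat.cast_sum]
  have : ∑ w, g w ≤ Wb t := by
    -- peel off the diagonal term
    rw [← Finset.sum_erase_add Finset.univ g (mem_univ u)]
    have hgu : g u = Mcnt G t u u := by rw [hg]; simp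
    have hdiag : Mcnt G t u u ≤ t := le_of_lt (Mcnt_diag ht hstar htilde u)
    -- split the rest by adjacency
    rw [← Finset.sum_filter_add_sum_filter_not (Finset.univ.erase u) (fun w => G.Adj u w) g]
    have hoffdiag : ∀ w ∈ Finset.univ.erase u, w ≠ u := fun w hw => (mem_erase.mp hw).1
    have hA : ∑ w ∈ (Finset.univ.erase u).filter (fun w => G.Adj u w), g w
        ≤ Ram (ss t) t + t*t*pp t := by
      have hterm : ∀ w ∈ (Finset.univ.erase u).filter (fun w => G.Adj u w),
          g w ≤ (if Mcnt G t u w = 0 then 1 else 0) + Mcnt G t u w * (Mcnt G t u w - 1) := by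
        intro w hw
        have hwne : w ≠ u := (mem_erase.mp (mem_filter.mp hw).1).1
        have hadjw : G.Adj u w := (mem_filter.mp hw).2
        simp only [hg, if_neg hwne, if_pos hadjw]
        by_cases hM : Mcnt G t u w = 0
        · rw [if_pos hM, if_pos hM, hM]
        · rw [if_neg hM, if_neg hM]
          omega
      refine (Finset.sum_le_sum hterm).trans ?_
      rw [Finset.sum_add_distrib]
      refine Nat.add_le_add ?_ ?_
      · rw [← card_filter]
        refine (card_le_card ?_).trans (le_of_lt (R4 ht hstar htilde u))
        intro w hw
        have hadjw : G.Adj u w := (mem_filter.mp (mem_filter.mp hw).1).2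
        have hM : Mcnt G t u w = 0 := (mem_filter.mp hw).2
        rw [mem_filter]
        refine ⟨mem_univ w, hadjw, ?_⟩
        intro Q hQ hmem
        unfold Mcnt at hM
        rw [Finset.card_eq_zero] at hM
        have hQin : Q ∈ (QFam G t).filter (fun Q => u ∈ Q ∧ w ∈ Q) :=
          mem_filter.mpr ⟨hQ, hmem.2, hmem.1⟩
        rw [hM] at hQin
        exact absurd hQin (notMem_empty Q)
      · refine (Finset.sum_le_sum_of_subset (filter_subset _ _)).trans
          (count2 ht hstar htilde u)
    have hB : ∑ w ∈ (Finset.univ.erase u).filter (fun w => ¬ G.Adj u w), g w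
        ≤ t * d0 t := by
      have hterm : ∀ w ∈ (Finset.univ.erase u).filter (fun w => ¬ G.Adj u w),
          g w = Mcnt G t u w := by
        intro w hw
        have hwne : w ≠ u := (mem_erase.mp (mem_filter.mp hw).1).1
        have hadjw : ¬ G.Adj u w := (mem_filter.mp hw).2
        simp only [hg, if_neg hwne, if_neg hadjw]
      rw [Finset.sum_congr rfl hterm]
      exact count3 ht hstar htilde u
    rw [Wb]
    omega
  exact_mod_cast this

lemma quadform (ht : 3 ≤ t) (hstar : IsEmpty (starG t ↪g G))
    (htilde : IsEmpty (tildeK t ↪g G)) (x : V → ℝ) :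
    -((Wb t : ℝ)) * ∑ v, x v ^ 2
      ≤ ∑ u, ∑ w, (if G.Adj u w then (1:ℝ) else 0) * (x u * x w) := by
  set a : V → V → ℝ := fun u w => if G.Adj u w then (1:ℝ) else 0 with ha
  set D : V → V → ℝ := fun u w => |a u w - (Mcnt G t u w : ℝ)| with hD
  have hDsymm : ∀ u w, D u w = D w u := by
    intro u w
    simp only [hD, ha]
    rw [Mcnt_symm (G := G) (t := t) u w]
    congr 2
    by_cases h : G.Adj u w
    · rw [if_pos h, if_pos h.symm]
    · rw [if_neg h, if_neg (fun hh => h hh.symm)]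
  have hsplit : ∑ u, ∑ w, a u w * (x u * x w)
      = (∑ u, ∑ w, (Mcnt G t u w : ℝ) * (x u * x w))
        + ∑ u, ∑ w, (a u w - (Mcnt G t u w : ℝ)) * (x u * x w) := by
    rw [← Finset.sum_add_distrib]
    refine Finset.sum_congr rfl fun u _ => ?_
    rw [← Finset.sum_add_distrib]
    refine Finset.sum_congr rfl fun w _ => ?_
    ring
  have herr : -∑ u, ∑ w, D u w * ((x u ^ 2 + x w ^ 2) / 2)
      ≤ ∑ u, ∑ w, (a u w - (Mcnt G t u w : ℝ)) * (x u * x w) := by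
    rw [← Finset.sum_neg_distrib]
    refine Finset.sum_le_sum fun u _ => ?_
    rw [← Finset.sum_neg_distrib]
    refine Finset.sum_le_sum fun w _ => ?_
    have habs : |x u * x w| ≤ (x u ^ 2 + x w ^ 2) / 2 := by
      rw [abs_mul]
      nlinarith [sq_nonneg (|x u| - |x w|), sq_abs (x u), sq_abs (x w),
        abs_nonneg (x u), abs_nonneg (x w)]
    have h1 : |(a u w - (Mcnt G t u w : ℝ)) * (x u * x w)|
        ≤ D u w * ((x u ^ 2 + x w ^ 2) / 2) := by
      rw [abs_mul]
      exact mul_le_mul_of_nonneg_left habs (abs_nonneg _)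
    have h2 := neg_abs_le ((a u w - (Mcnt G t u w : ℝ)) * (x u * x w))
    linarith
  have hrow : ∀ u : V, ∑ w, D u w ≤ (Wb t : ℝ) := fun u => row_bound ht hstar htilde u
  have hbound : ∑ u, ∑ w, D u w * ((x u ^ 2 + x w ^ 2) / 2)
      ≤ (Wb t : ℝ) * ∑ v, x v ^ 2 := by
    have hsplit2 : ∑ u, ∑ w, D u w * ((x u ^ 2 + x w ^ 2) / 2)
        = (∑ u, ∑ w, D u w * (x u ^ 2 / 2)) + ∑ u, ∑ w, D u w * (x w ^ 2 / 2) := by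
      rw [← Finset.sum_add_distrib]
      refine Finset.sum_congr rfl fun u _ => ?_
      rw [← Finset.sum_add_distrib]
      refine Finset.sum_congr rfl fun w _ => ?_
      ring
    have hS1 : ∀ y : V → ℝ, ∑ u, ∑ w, D u w * (y u ^ 2 / 2)
        ≤ (Wb t : ℝ) * ∑ v, (y v ^ 2 / 2) := by
      intro y
      rw [Finset.mul_sum]
      refine Finset.sum_le_sum fun u _ => ?_
      rw [← Finset.sum_mul]
      exact mul_le_mul_of_nonneg_right (hrow u) (by positivity)
    have hS2 : ∑ u, ∑ w, D u w * (x w ^ 2 / 2) ≤ (Wb t : ℝ) * ∑ v, (x v ^ 2 / 2) := by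
      rw [Finset.sum_comm]
      calc ∑ w, ∑ u, D u w * (x w ^ 2 / 2)
          = ∑ w, ∑ u, D w u * (x w ^ 2 / 2) := by
            refine Finset.sum_congr rfl fun w _ => Finset.sum_congr rfl fun u _ => ?_
            rw [hDsymm]
        _ ≤ (Wb t : ℝ) * ∑ v, (x v ^ 2 / 2) := hS1 x
    have hsumhalf : ∑ v, (x v ^ 2 / 2) = (∑ v, x v ^ 2) / 2 := by
      rw [Finset.sum_div]
    calc ∑ u, ∑ w, D u w * ((x u ^ 2 + x w ^ 2) / 2)
        = (∑ u, ∑ w, D u w * (x u ^ 2 / 2)) + ∑ u, ∑ w, D u w * (x w ^ 2 / 2) := hsplit2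
      _ ≤ (Wb t : ℝ) * ∑ v, (x v ^ 2 / 2) + (Wb t : ℝ) * ∑ v, (x v ^ 2 / 2) :=
          add_le_add (hS1 x) hS2
      _ = (Wb t : ℝ) * ∑ v, x v ^ 2 := by rw [hsumhalf]; ring
  have hpsd := Mcnt_psd (G := G) (t := t) x
  calc -((Wb t : ℝ)) * ∑ v, x v ^ 2
      ≤ -∑ u, ∑ w, D u w * ((x u ^ 2 + x w ^ 2) / 2) := by linarith
    _ ≤ ∑ u, ∑ w, (a u w - (Mcnt G t u w : ℝ)) * (x u * x w) := herr
    _ ≤ ∑ u, ∑ w, a u w * (x u * x w) := by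
        rw [hsplit]
        linarith
lemma eig_lower (ht : 3 ≤ t) (hstar : IsEmpty (starG t ↪g G))
    (htilde : IsEmpty (tildeK t ↪g G)) {μ : ℝ}
    (hμ : ∃ x : V → ℝ, x ≠ 0 ∧ (adjMat G).mulVec x = μ • x) : -((Wb t : ℝ)) ≤ μ := by
  obtain ⟨x, hx0, hxe⟩ := hμ
  have hS : 0 < ∑ v, x v ^ 2 := by
    obtain ⟨u, hu⟩ : ∃ u, x u ≠ 0 := by
      by_contra h
      push_neg at h
      exact hx0 (funext h)
    refine Finset.sum_pos' (fun v _ => sq_nonneg _) ⟨u, mem_univ u, ?_⟩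
    positivity
  have hQF : ∑ u, x u * ((adjMat G).mulVec x u)
      = ∑ u, ∑ w, (if G.Adj u w then (1:ℝ) else 0) * (x u * x w) := by
    refine Finset.sum_congr rfl fun u _ => ?_
    simp only [Matrix.mulVec, dotProduct, adjMat, Matrix.of_apply]
    rw [Finset.mul_sum]
    refine Finset.sum_congr rfl fun w _ => ?_
    ring
  have hμS : ∑ u, x u * ((adjMat G).mulVec x u) = μ * ∑ v, x v ^ 2 := by
    rw [hxe, Finset.mul_sum]
    refine Finset.sum_congr rfl fun u _ => ?_
    simp only [Pi.smul_apply, smul_eq_mul]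
    ring
  have hlow := quadform ht hstar htilde x
  rw [← hQF, hμS] at hlow
  have := le_of_mul_le_mul_right (by linarith : -((Wb t : ℝ)) * ∑ v, x v ^ 2 ≤ μ * ∑ v, x v ^ 2) hS
  linarith

end Main
end Hoff

/-- **Hoffman.** For every integer `t ≥ 3` there is a positive constant `λ(t)` such that
every graph containing neither `K_{1,t}` nor `K̃_{2t}` as an induced subgraph has
smallest eigenvalue at least `-λ(t)`. -/
theorem stmt10 (t : ℕ) (ht : 3 ≤ t) :
    ∃ lam : ℝ, 0 < lam ∧ ∀ (n : ℕ) (G : SimpleGraph (Fin n)),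
      IsEmpty (starG t ↪g G) → IsEmpty (tildeK t ↪g G) →
      -lam ≤ minEig G := by
  have hW : (0:ℝ) ≤ (Hoff.Wb t : ℝ) := Nat.cast_nonneg _
  refine ⟨(Hoff.Wb t : ℝ) + 1, by linarith, ?_⟩
  intro n G hstar htilde
  rw [minEig, matMinEig]
  rcases Set.eq_empty_or_nonempty
    {μ : ℝ | ∃ v : Fin n → ℝ, v ≠ 0 ∧ (adjMat G).mulVec v = μ • v} with h | h
  · rw [h, Real.sInf_empty]
    linarith
  · refine le_csInf h ?_
    intro μ hμ
    have := Hoff.eig_lower ht hstar htilde hμ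
    linarith
end

section
/- (Aharoni–Alon–Berger) Let k ≥ 2 and ℓ ≥ 2 be integers and let G be a finite simple graph with maximum degree at most k containing no induced copy of K_{1,ℓ}. Let t(k,ℓ) denote the minimum possible number of edges of a graph on k vertices with no stable (independent) set of size ℓ. If θ is the largest eigenvalue of the Laplacian matrix L(G) = Δ(G) - A(G), then θ ≤ 2k - t(k,ℓ)/(k-1). -/
open scoped Classical

/-- The largest (real) eigenvalue of a matrix. -/
noncomputable def matMaxEig {V : Type*} [Fintype V] (A : Matrix V V ℝ) : ℝ :=
  sSup {μ : ℝ | ∃ v : V → ℝ, v ≠ 0 ∧ A.mulVec v = μ • v}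

/-- The Laplacian matrix `L(G) = Δ(G) - A(G)`. -/
noncomputable def lapMat {V : Type*} [Fintype V] [DecidableEq V] (G : SimpleGraph V) :
    Matrix V V ℝ :=
  Matrix.diagonal (fun v => (deg G v : ℝ)) - adjMat G

noncomputable def E2 {n : ℕ} (G : SimpleGraph (Fin n)) (w : Fin n) : ℕ :=
  ∑ u ∈ G.neighborFinset w, ((G.neighborFinset w).filter (fun v => G.Adj u v)).card

lemma deg_eq_degree {n : ℕ} (G : SimpleGraph (Fin n)) (v : Fin n) :
    deg G v = G.degree v := by
  rw [deg, Set.ncard_eq_toFinset_card', SimpleGraph.degree, SimpleGraph.neighborFinset_def]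

lemma rot3 {n : ℕ} (f : Fin n → Fin n → Fin n → ℝ) :
    ∑ i : Fin n, ∑ j : Fin n, ∑ w : Fin n, f i j w
      = ∑ i : Fin n, ∑ j : Fin n, ∑ w : Fin n, f j w i := by
  calc ∑ i : Fin n, ∑ j : Fin n, ∑ w : Fin n, f i j w
      = ∑ i : Fin n, ∑ w : Fin n, ∑ j : Fin n, f i j w :=
        Finset.sum_congr rfl fun i _ => Finset.sum_comm
    _ = ∑ w : Fin n, ∑ i : Fin n, ∑ j : Fin n, f i j w := Finset.sum_comm

set_option maxHeartbeats 2000000 in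
lemma main_analytic {n k t : ℕ} (hk : 2 ≤ k) (G : SimpleGraph (Fin n))
    (hdeg : ∀ v, G.degree v ≤ k)
    (hE2 : ∀ w, 2 * t ≤ E2 G w + 2 * (k - G.degree w) * (k - 1))
    (htk : (t : ℝ) ≤ k * k) :
    matMaxEig (lapMat G) ≤ 2 * (k : ℝ) - (t : ℝ) / ((k : ℝ) - 1) := by
  have hk1 : (1 : ℝ) < (k : ℝ) := by exact_mod_cast hk.trans_lt' one_lt_two
  have hkk : (0:ℝ) < (k:ℝ) - 1 := by linarith
  have hrhs : (0:ℝ) ≤ 2 * (k : ℝ) - (t : ℝ) / ((k : ℝ) - 1) := by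
    rw [sub_nonneg, div_le_iff₀ hkk]
    have hk2 : (2:ℝ) ≤ (k:ℝ) := by exact_mod_cast hk
    nlinarith [htk, hk2]
  apply Real.sSup_le _ hrhs
  rintro μ ⟨x, hx0, hx⟩
  -- notation
  set A : Fin n → Fin n → ℝ := fun i j => if G.Adj i j then (1:ℝ) else 0 with hA
  have hA_nonneg : ∀ i j, 0 ≤ A i j := by
    intro i j; simp only [hA]; split <;> norm_num
  have hA_symm : ∀ i j, A i j = A j i := by
    intro i j; simp only [hA]; rw [G.adj_comm]
  set D : Fin n → ℝ := fun i => (G.degree i : ℝ) with hD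
  have hDk : ∀ i, D i ≤ k := fun i => by
    show (G.degree i : ℝ) ≤ (k : ℝ); exact_mod_cast hdeg i
  have hD0 : ∀ i, 0 ≤ D i := fun i => by positivity
  set N : ℝ := ∑ i, x i ^ 2 with hN
  set S1 : ℝ := ∑ i, D i * x i ^ 2 with hS1
  set S2 : ℝ := ∑ i, ∑ j, A i j * (x i * x j) with hS2
  set P : ℝ := ∑ i, ∑ j, A i j * (x i + x j) ^ 2 with hP
  set F : Fin n → Fin n → Fin n → ℝ := fun i j w => A i w * A j w * A i j with hF
  have hF_nonneg : ∀ i j w, 0 ≤ F i j w := fun i j w => by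
    exact mul_nonneg (mul_nonneg (hA_nonneg _ _) (hA_nonneg _ _)) (hA_nonneg _ _)
  set T : ℝ := ∑ i, ∑ j, ∑ w, F i j w * (x i + x j) ^ 2 with hT
  set U : ℝ := ∑ i, ∑ j, ∑ w, F i j w * x w ^ 2 with hU
  -- N positive
  have hNpos : 0 < N := by
    obtain ⟨i, hi⟩ := Function.ne_iff.1 hx0
    have h1 : x i ^ 2 ≤ N := by
      rw [hN]
      exact Finset.single_le_sum (fun j _ => sq_nonneg (x j)) (Finset.mem_univ i)
    have : 0 < x i ^ 2 := (sq_nonneg (x i)).lt_of_ne (Ne.symm (pow_ne_zero 2 hi))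
    linarith
  -- row sums of A
  have hrow : ∀ i, ∑ j, A i j = D i := by
    intro i
    have hflt : Finset.univ.filter (fun j => G.Adj i j) = G.neighborFinset i := by
      ext j; simp
    simp only [hA, hD]
    rw [Finset.sum_boole, hflt]
    exact_mod_cast congrArg (Nat.cast : ℕ → ℝ) (SimpleGraph.card_neighborFinset_eq_degree G i)
  -- eigen equation pointwise
  have heig : ∀ i, D i * x i - ∑ j, A i j * x j = μ * x i := by
    intro i
    have := congrFun hx i
    rw [Pi.smul_apply, smul_eq_mul] at this
    rw [← this, lapMat, Matrix.sub_mulVec]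
    simp only [Pi.sub_apply]
    congr 1
    rw [Matrix.mulVec_diagonal, deg_eq_degree]
  -- μ N = S1 - S2
  have hmuN : μ * N = S1 - S2 := by
    have key : ∀ i, μ * x i ^ 2 = D i * x i ^ 2 - ∑ j, A i j * (x i * x j) := by
      intro i
      calc μ * x i ^ 2 = (μ * x i) * x i := by ring
        _ = (D i * x i - ∑ j, A i j * x j) * x i := by rw [← heig i]
        _ = D i * x i ^ 2 - ∑ j, A i j * x j * x i := by
            rw [sub_mul, Finset.sum_mul]; ring
        _ = D i * x i ^ 2 - ∑ j, A i j * (x i * x j) := by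
            congr 1; exact Finset.sum_congr rfl fun j _ => by ring
    rw [hN, Finset.mul_sum, hS1, hS2, ← Finset.sum_sub_distrib]
    exact Finset.sum_congr rfl fun i _ => key i
  -- P = 2 S1 + 2 S2
  have hPeq : P = 2 * S1 + 2 * S2 := by
    have expand : ∀ i j, A i j * (x i + x j) ^ 2
        = A i j * x i ^ 2 + A i j * x j ^ 2 + 2 * (A i j * (x i * x j)) := by
      intro i j; ring
    have hX : ∑ i, ∑ j, A i j * x i ^ 2 = S1 := by
      rw [hS1]
      refine Finset.sum_congr rfl fun i _ => ?_
      rw [← Finset.sum_mul, hrow]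
    have hY : ∑ i, ∑ j, A i j * x j ^ 2 = S1 := by
      rw [Finset.sum_comm, hS1]
      refine Finset.sum_congr rfl fun j _ => ?_
      rw [← Finset.sum_mul]
      rw [Finset.sum_congr rfl (fun i _ => hA_symm i j), hrow]
    calc P = ∑ i, ∑ j, (A i j * x i ^ 2 + A i j * x j ^ 2 + 2 * (A i j * (x i * x j))) := by
          rw [hP]; exact Finset.sum_congr rfl fun i _ => Finset.sum_congr rfl fun j _ => expand i j
      _ = (∑ i, ∑ j, A i j * x i ^ 2) + (∑ i, ∑ j, A i j * x j ^ 2)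
            + ∑ i, ∑ j, 2 * (A i j * (x i * x j)) := by
          simp only [Finset.sum_add_distrib]
      _ = 2 * S1 + 2 * S2 := by
          rw [hX, hY, hS2]
          simp only [← Finset.mul_sum]
          ring
  -- common neighbour bound
  have hC : ∀ i j, G.Adj i j → ∑ w, A i w * A j w ≤ (k:ℝ) - 1 := by
    intro i j hij
    have h1 : ∀ w, A i w * A j w = if (G.Adj i w ∧ G.Adj j w) then (1:ℝ) else 0 := by
      intro w
      simp only [hA]
      by_cases h1 : G.Adj i w <;> by_cases h2 : G.Adj j w <;> simp [h1, h2]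
    rw [Finset.sum_congr rfl fun w _ => h1 w, Finset.sum_boole]
    have hsub : Finset.univ.filter (fun w => G.Adj i w ∧ G.Adj j w)
        ⊆ (G.neighborFinset i).erase j := by
      intro w hw
      simp only [Finset.mem_filter] at hw
      exact Finset.mem_erase.2 ⟨fun e => G.irrefl (e ▸ hw.2.2),
        (G.mem_neighborFinset i w).2 hw.2.1⟩
    have hcard := Finset.card_le_card hsub
    have hje : ((G.neighborFinset i).erase j).card = G.degree i - 1 := by
      rw [Finset.card_erase_of_mem ((G.mem_neighborFinset i j).2 hij),
        SimpleGraph.card_neighborFinset_eq_degree]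
    have hd1 : 1 ≤ G.degree i := by
      have : j ∈ G.neighborFinset i := (G.mem_neighborFinset i j).2 hij
      have := Finset.card_pos.2 ⟨j, this⟩
      rw [SimpleGraph.card_neighborFinset_eq_degree] at this
      omega
    have hnat : (Finset.univ.filter (fun w => G.Adj i w ∧ G.Adj j w)).card + 1 ≤ k := by
      have := hdeg i
      omega
    have := (Nat.cast_le (α := ℝ)).2 hnat
    push_cast at this
    linarith
  -- T ≤ (k-1) P
  have hTP : T ≤ ((k:ℝ) - 1) * P := by
    rw [hT, hP, Finset.mul_sum]
    refine Finset.sum_le_sum fun i _ => ?_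
    rw [Finset.mul_sum]
    refine Finset.sum_le_sum fun j _ => ?_
    have hre : ∑ w, F i j w * (x i + x j) ^ 2
        = (∑ w, A i w * A j w) * (A i j * (x i + x j) ^ 2) := by
      rw [Finset.sum_mul]
      exact Finset.sum_congr rfl fun w _ => by simp only [hF]; ring
    rw [hre]
    by_cases hij : G.Adj i j
    · refine mul_le_mul_of_nonneg_right (hC i j hij) ?_
      exact mul_nonneg (hA_nonneg _ _) (sq_nonneg _)
    · have hz : A i j = 0 := by simp [hA, hij]
      rw [hz]
      simp
  -- symmetry of F
  have hsym : ∀ i j w, F j w i = F i j w := by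
    intro i j w
    simp only [hF]
    rw [hA_symm j i, hA_symm w i]
    ring
  -- symmetrized versions of T
  have hT2 : T = ∑ i, ∑ j, ∑ w, F i j w * (x j + x w) ^ 2 := by
    rw [hT, rot3 (fun i j w => F i j w * (x i + x j) ^ 2)]
    exact Finset.sum_congr rfl fun i _ => Finset.sum_congr rfl fun j _ =>
      Finset.sum_congr rfl fun w _ => by rw [hsym]
  have hT3 : T = ∑ i, ∑ j, ∑ w, F i j w * (x i + x w) ^ 2 := by
    rw [hT2, rot3 (fun i j w => F i j w * (x j + x w) ^ 2)]
    refine Finset.sum_congr rfl fun i _ => Finset.sum_congr rfl fun j _ =>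
      Finset.sum_congr rfl fun w _ => ?_
    rw [hsym]
    ring
  -- symmetrized versions of U
  have hU1 : U = ∑ i, ∑ j, ∑ w, F i j w * x i ^ 2 := by
    rw [hU, rot3 (fun i j w => F i j w * x w ^ 2)]
    refine Finset.sum_congr rfl fun i _ => Finset.sum_congr rfl fun j _ =>
      Finset.sum_congr rfl fun w _ => ?_
    rw [hsym]
  have hU2 : U = ∑ i, ∑ j, ∑ w, F i j w * x j ^ 2 := by
    rw [hU1, rot3 (fun i j w => F i j w * x i ^ 2)]
    refine Finset.sum_congr rfl fun i _ => Finset.sum_congr rfl fun j _ =>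
      Finset.sum_congr rfl fun w _ => ?_
    rw [hsym]
  -- T ≥ U
  have hTU : U ≤ T := by
    have hTsum : ∑ i, ∑ j, ∑ w, (F i j w * (x i + x j) ^ 2 + F i j w * (x j + x w) ^ 2
        + F i j w * (x i + x w) ^ 2) = T + T + T := by
      simp only [Finset.sum_add_distrib]
      rw [← hT, ← hT2, ← hT3]
    have hUsum : ∑ i, ∑ j, ∑ w, (F i j w * x i ^ 2 + F i j w * x j ^ 2
        + F i j w * x w ^ 2) = U + U + U := by
      simp only [Finset.sum_add_distrib]
      rw [← hU1, ← hU2, ← hU]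
    have hle : ∑ i, ∑ j, ∑ w, (F i j w * x i ^ 2 + F i j w * x j ^ 2 + F i j w * x w ^ 2)
        ≤ ∑ i, ∑ j, ∑ w, (F i j w * (x i + x j) ^ 2 + F i j w * (x j + x w) ^ 2
          + F i j w * (x i + x w) ^ 2) := by
      refine Finset.sum_le_sum fun i _ => Finset.sum_le_sum fun j _ =>
        Finset.sum_le_sum fun w _ => ?_
      nlinarith [hF_nonneg i j w, sq_nonneg (x i + x j + x w),
        mul_nonneg (hF_nonneg i j w) (sq_nonneg (x i + x j + x w))]
    rw [hTsum, hUsum] at hle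
    linarith
  -- U in terms of E2
  have hUE : U = ∑ w, (E2 G w : ℝ) * x w ^ 2 := by
    have h1 : U = ∑ w, ∑ i, ∑ j, F i j w * x w ^ 2 := by
      rw [hU]
      calc ∑ i, ∑ j, ∑ w, F i j w * x w ^ 2
          = ∑ i, ∑ w, ∑ j, F i j w * x w ^ 2 :=
            Finset.sum_congr rfl fun i _ => Finset.sum_comm
        _ = ∑ w, ∑ i, ∑ j, F i j w * x w ^ 2 := Finset.sum_comm
    rw [h1]
    refine Finset.sum_congr rfl fun w _ => ?_
    have h2 : ∑ i, ∑ j, F i j w * x w ^ 2 = (∑ i, ∑ j, F i j w) * x w ^ 2 := by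
      rw [Finset.sum_mul]
      exact Finset.sum_congr rfl fun i _ => (Finset.sum_mul _ _ _).symm
    rw [h2]
    congr 1
    -- ∑ i, ∑ j, F i j w = E2 G w
    have h3 : ∀ i, ∑ j, A j w * A i j
        = (((G.neighborFinset w).filter (fun v => G.Adj i v)).card : ℝ) := by
      intro i
      have hpt : ∀ j, A j w * A i j = if (G.Adj j w ∧ G.Adj i j) then (1:ℝ) else 0 := by
        intro j
        simp only [hA]
        by_cases h1 : G.Adj j w <;> by_cases h2 : G.Adj i j <;> simp [h1, h2]
      rw [Finset.sum_congr rfl fun j _ => hpt j, Finset.sum_boole]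
      congr 2
      ext j
      simp only [Finset.mem_filter, Finset.mem_univ, true_and,
        SimpleGraph.mem_neighborFinset]
      rw [G.adj_comm j w]
    have h4 : ∑ i, ∑ j, F i j w
        = ∑ i, A i w * (((G.neighborFinset w).filter (fun v => G.Adj i v)).card : ℝ) := by
      refine Finset.sum_congr rfl fun i _ => ?_
      rw [← h3 i, Finset.mul_sum]
      exact Finset.sum_congr rfl fun j _ => by simp only [hF]; ring
    rw [h4]
    have h5 : ∀ i, A i w * (((G.neighborFinset w).filter (fun v => G.Adj i v)).card : ℝ)
        = if G.Adj i w then (((G.neighborFinset w).filter (fun v => G.Adj i v)).card : ℝ)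
          else 0 := by
      intro i
      simp only [hA]
      by_cases h : G.Adj i w <;> simp [h]
    rw [Finset.sum_congr rfl fun i _ => h5 i, ← Finset.sum_filter]
    have h6 : Finset.univ.filter (fun i => G.Adj i w) = G.neighborFinset w := by
      ext i
      simp [G.adj_comm]
    rw [h6, E2]
    push_cast
    rfl
  -- lower bound for U
  have hE2R : ∀ w, (2*(t:ℝ)) ≤ (E2 G w : ℝ) + 2 * ((k:ℝ) - D w) * ((k:ℝ) - 1) := by
    intro w
    have h := hE2 w
    have hc := (Nat.cast_le (α := ℝ)).2 h
    push_cast [Nat.cast_sub (hdeg w), Nat.cast_sub (by omega : 1 ≤ k)] at hc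
    simp only [hD]
    linarith
  have hUlow : 2*(t:ℝ)*N - 2*((k:ℝ)-1)*((k:ℝ)*N - S1) ≤ U := by
    have hstep : ∑ w, ((2*(t:ℝ)) - 2*((k:ℝ) - D w)*((k:ℝ)-1)) * x w ^ 2 ≤ U := by
      rw [hUE]
      refine Finset.sum_le_sum fun w _ => ?_
      exact mul_le_mul_of_nonneg_right (by linarith [hE2R w]) (sq_nonneg _)
    have hexp : ∑ w, ((2*(t:ℝ)) - 2*((k:ℝ) - D w)*((k:ℝ)-1)) * x w ^ 2
        = 2*(t:ℝ)*N - 2*((k:ℝ)-1)*((k:ℝ)*N - S1) := by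
      have e1 : ∑ w, ((2*(t:ℝ)) - 2*((k:ℝ) - D w)*((k:ℝ)-1)) * x w ^ 2
          = ∑ w, (2*(t:ℝ)*x w ^ 2 - 2*((k:ℝ)-1)*((k:ℝ)*x w ^ 2 - D w * x w ^ 2)) :=
        Finset.sum_congr rfl fun w _ => by ring
      have eA : ∑ w, 2*(t:ℝ)*x w ^ 2 = 2*(t:ℝ)*N := by
        rw [hN, Finset.mul_sum]
      have eB : ∑ w, 2*((k:ℝ)-1)*((k:ℝ)*x w ^ 2 - D w * x w ^ 2)
          = 2*((k:ℝ)-1)*((k:ℝ)*N - S1) := by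
        rw [hN, hS1, Finset.mul_sum, ← Finset.sum_sub_distrib, Finset.mul_sum]
      rw [e1, Finset.sum_sub_distrib, eA, eB]
    linarith [hstep, hexp.symm.le, hexp.le]
  -- S1 ≤ k N
  have hS1k : S1 ≤ (k:ℝ) * N := by
    rw [hS1, hN, Finset.mul_sum]
    exact Finset.sum_le_sum fun i _ => mul_le_mul_of_nonneg_right (hDk i) (sq_nonneg _)
  -- assemble
  clear_value A D N S1 S2 P F T U
  have hqt : (t:ℝ) / ((k:ℝ)-1) * ((k:ℝ)-1) = (t:ℝ) := div_mul_cancel₀ _ (ne_of_gt hkk)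
  have hchain : 2*(t:ℝ)*N - 2*((k:ℝ)-1)*((k:ℝ)*N - S1) ≤ ((k:ℝ)-1) * P :=
    le_trans hUlow (le_trans hTU hTP)
  have h1 : μ * N = 2 * S1 - P / 2 := by linarith [hmuN, hPeq]
  clear hA hA_nonneg hA_symm hD hDk hD0 hN hS1 hS2 hP hF hF_nonneg hT hU hrow heig
  clear hC hTP hsym hT2 hT3 hU1 hU2 hTU hUE hE2R hUlow hx hx0 hE2 hdeg hrhs hmuN hPeq
  clear F A D T U x G
  have h1' : μ * N * ((k:ℝ)-1) = (2 * S1 - P / 2) * ((k:ℝ)-1) := by rw [h1]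
  have hS1k' : S1 * ((k:ℝ)-1) ≤ (k:ℝ) * N * ((k:ℝ)-1) :=
    mul_le_mul_of_nonneg_right hS1k (le_of_lt hkk)
  have hmul : μ * N * ((k:ℝ)-1) ≤ (2*(k:ℝ)*((k:ℝ)-1) - (t:ℝ)) * N := by
    nlinarith [h1', hchain, hS1k']
  have hmu2 : μ ≤ (2*(k:ℝ)*((k:ℝ)-1) - (t:ℝ)) / ((k:ℝ)-1) := by
    rw [le_div_iff₀ hkk]
    nlinarith [hmul, hNpos]
  have heq : (2*(k:ℝ)*((k:ℝ)-1) - (t:ℝ)) / ((k:ℝ)-1) = 2*(k:ℝ) - (t:ℝ)/((k:ℝ)-1) := by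
    field_simp
  linarith [hmu2, heq.le, heq.ge]

lemma aux_no_indep {n l : ℕ} (G : SimpleGraph (Fin n))
    (hstar : IsEmpty (starG l ↪g G)) (w : Fin n) (s : Finset (Fin n))
    (hadj : ∀ v ∈ s, G.Adj w v) (hind : ∀ a ∈ s, ∀ b ∈ s, a ≠ b → ¬ G.Adj a b) :
    s.card < l := by
  by_contra hc
  push_neg at hc
  obtain ⟨u, hus, huc⟩ := Finset.exists_subset_card_eq hc
  have e := u.equivFinOfCardEq huc
  set f : Fin (l + 1) → Fin n := Fin.cases w (fun i => ↑(e.symm i)) with hf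
  have hmem : ∀ i : Fin l, (↑(e.symm i) : Fin n) ∈ s := fun i => hus (e.symm i).2
  have hne : ∀ i : Fin l, (↑(e.symm i) : Fin n) ≠ w := by
    intro i h
    exact G.irrefl (h ▸ hadj _ (hmem i))
  have finj : Function.Injective f := by
    intro a b hab
    induction a using Fin.cases with
    | zero =>
      induction b using Fin.cases with
      | zero => rfl
      | succ j => simp only [hf, Fin.cases_zero, Fin.cases_succ] at hab
                  exact absurd hab.symm (hne j)
    | succ i =>
      induction b using Fin.cases with
      | zero => simp only [hf, Fin.cases_zero, Fin.cases_succ] at hab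
                exact absurd hab (hne i)
      | succ j =>
        simp only [hf, Fin.cases_succ] at hab
        have : e.symm i = e.symm j := Subtype.coe_injective hab
        rw [Fin.succ_inj]
        exact e.symm.injective this
  have hiff : ∀ a b : Fin (l+1), G.Adj (f a) (f b) ↔ (starG l).Adj a b := by
    intro a b
    have hstar_adj : ∀ a b : Fin (l+1), (starG l).Adj a b ↔ a ≠ b ∧ (a = 0 ∨ b = 0) :=
      fun a b => SimpleGraph.fromRel_adj _ a b
    induction a using Fin.cases with
    | zero =>
      induction b using Fin.cases with
      | zero => simp [hstar_adj]
      | succ j =>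
        simp only [hf, Fin.cases_zero, Fin.cases_succ, hstar_adj]
        constructor
        · intro _; exact ⟨(Fin.succ_ne_zero j).symm, Or.inl trivial⟩
        · intro _; exact hadj _ (hmem j)
    | succ i =>
      induction b using Fin.cases with
      | zero =>
        simp only [hf, Fin.cases_zero, Fin.cases_succ, hstar_adj]
        constructor
        · intro h; exact ⟨Fin.succ_ne_zero i, Or.inr trivial⟩
        · intro _; exact (hadj _ (hmem i)).symm
      | succ j =>
        simp only [hf, Fin.cases_succ, hstar_adj]
        constructor
        · intro h
          by_cases hij : i = j
          · exact absurd h (hij ▸ G.irrefl)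
          · exact absurd h (hind _ (hmem i) _ (hmem j)
              (fun hh => hij (e.symm.injective (Subtype.coe_injective hh))))
        · rintro ⟨-, h | h⟩ <;> exact absurd h (Fin.succ_ne_zero _)
  exact hstar.elim ⟨⟨f, finj⟩, (hiff _ _)⟩

lemma aux_t_le {n k l t : ℕ} (hk : 2 ≤ k) (hl : 2 ≤ l) (G : SimpleGraph (Fin n))
    (hdeg : ∀ v, G.degree v ≤ k)
    (hstar : IsEmpty (starG l ↪g G))
    (ht : t = sInf {m : ℕ | ∃ H : SimpleGraph (Fin k), H.edgeSet.ncard = m ∧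
        ¬ ∃ s : Finset (Fin k), s.card = l ∧
          (∀ x ∈ s, ∀ y ∈ s, x ≠ y → ¬ H.Adj x y)}) (w : Fin n) :
    2 * t ≤ E2 G w + 2 * (k - G.degree w) * (k - 1) := by
  set s : Finset (Fin n) := G.neighborFinset w with hs
  set d : ℕ := G.degree w with hd
  have hdk : d ≤ k := hdeg w
  have hcards : s.card = d := rfl
  obtain ⟨φ⟩ : Nonempty (↥s ↪ Fin k) := by
    apply Function.Embedding.nonempty_of_card_le
    simpa [Fintype.card_coe, hcards] using hdk
  set rel : Fin k → Fin k → Prop :=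
    fun a b => ∀ u v : ↥s, φ u = a → φ v = b → G.Adj ↑u ↑v with hrel
  set H : SimpleGraph (Fin k) := SimpleGraph.fromRel rel with hH
  have hHadj : ∀ a b, H.Adj a b ↔ a ≠ b ∧ (rel a b ∨ rel b a) :=
    fun a b => SimpleGraph.fromRel_adj _ a b
  have hrel_nr : ∀ a b, a ∉ Set.range φ → rel a b := by
    intro a b ha u v hu _; exact absurd ⟨u, hu⟩ ha
  have hadj_nr : ∀ a b, a ∉ Set.range φ → a ≠ b → H.Adj a b := by
    intro a b ha hab; exact (hHadj a b).2 ⟨hab, Or.inl (hrel_nr a b ha)⟩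
  have hadj_rr : ∀ u v : ↥s, H.Adj (φ u) (φ v) → G.Adj ↑u ↑v := by
    intro u v h
    rcases (hHadj _ _).1 h with ⟨hne, h | h⟩
    · exact h u v rfl rfl
    · exact (h v u rfl rfl).symm
  have hadj_rr' : ∀ u v : ↥s, G.Adj ↑u ↑v → H.Adj (φ u) (φ v) := by
    intro u v h
    have huv : u ≠ v := fun e => G.irrefl (e ▸ h)
    refine (hHadj _ _).2 ⟨fun e => huv (φ.injective e), Or.inl ?_⟩
    intro u' v' hu hv
    rw [φ.injective hu, φ.injective hv]; exact h
  set ρ : Fin k → Fin n := fun a => if h : ∃ v : ↥s, φ v = a then ↑h.choose else w with hρ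
  have hρφ : ∀ v : ↥s, ρ (φ v) = ↑v := by
    intro v
    have h : ∃ v' : ↥s, φ v' = φ v := ⟨v, rfl⟩
    simp only [hρ, dif_pos h]
    exact congrArg _ (φ.injective h.choose_spec)
  -- H has no stable set of size l
  have hHstable : ¬ ∃ s' : Finset (Fin k), s'.card = l ∧
      (∀ x ∈ s', ∀ y ∈ s', x ≠ y → ¬ H.Adj x y) := by
    rintro ⟨s', hcard, hind⟩
    have hrange : ∀ a ∈ s', ∃ v : ↥s, φ v = a := by
      intro a ha
      by_contra hna
      obtain ⟨b, hb, hba⟩ := Finset.exists_mem_ne (by omega : 1 < s'.card) a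
      exact hind a ha b hb (Ne.symm hba) (hadj_nr a b (fun ⟨v, hv⟩ => hna ⟨v, hv⟩) (Ne.symm hba))
    have hinj : ∀ a ∈ s', ∀ b ∈ s', ρ a = ρ b → a = b := by
      intro a ha b hb hab
      obtain ⟨u, hu⟩ := hrange a ha; obtain ⟨v, hv⟩ := hrange b hb
      rw [← hu, ← hv, hρφ, hρφ] at hab
      rw [← hu, ← hv, Subtype.coe_injective hab]
    have hmem : ∀ a ∈ s', ρ a ∈ s := by
      intro a ha; obtain ⟨u, hu⟩ := hrange a ha; rw [← hu, hρφ]; exact u.2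
    have hlt := aux_no_indep G hstar w (s'.image ρ)
      (by intro v hv
          obtain ⟨a, ha, rfl⟩ := Finset.mem_image.1 hv
          exact (G.mem_neighborFinset w _).1 (hmem a ha))
      (by intro x hx y hy hxy hGxy
          obtain ⟨a, ha, rfl⟩ := Finset.mem_image.1 hx
          obtain ⟨b, hb, rfl⟩ := Finset.mem_image.1 hy
          obtain ⟨u, hu⟩ := hrange a ha; obtain ⟨v, hv⟩ := hrange b hb
          have hab : a ≠ b := fun e => hxy (e ▸ rfl)
          apply hind a ha b hb hab
          have hGuv : G.Adj ↑u ↑v := by rwa [← hu, ← hv, hρφ, hρφ] at hGxy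
          rw [← hu, ← hv]
          exact hadj_rr' u v hGuv)
    rw [Finset.card_image_of_injOn (fun a ha b hb => hinj a ha b hb), hcard] at hlt
    omega
  -- t ≤ number of edges of H
  have htle : t ≤ H.edgeFinset.card := by
    rw [ht]
    apply Nat.sInf_le
    refine ⟨H, ?_, hHstable⟩
    rw [← SimpleGraph.coe_edgeFinset, Set.ncard_coe_finset]
  -- edge counting
  have hdegsum : ∑ a : Fin k, H.degree a = 2 * H.edgeFinset.card :=
    SimpleGraph.sum_degrees_eq_twice_card_edges H
  set R : Finset (Fin k) := Finset.image (fun u : ↥s => φ u) Finset.univ with hR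
  have hRcard : R.card = d := by
    rw [hR, Finset.card_image_of_injective _ φ.injective, Finset.card_univ,
      Fintype.card_coe, hcards]
  have hRc : (Finset.univ \ R).card = k - d := by
    rw [Finset.card_sdiff_of_subset (Finset.subset_univ R), Finset.card_univ, Fintype.card_fin, hRcard]
  -- degree bound outside range
  have hdeg_out : ∀ a, H.degree a ≤ k - 1 := by
    intro a
    have := H.degree_lt_card_verts a
    rw [Fintype.card_fin] at this
    omega
  -- degree bound inside range
  have hdeg_in : ∀ u : ↥s, H.degree (φ u) ≤ (k - d) + (s.filter (fun v => G.Adj ↑u v)).card := by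
    intro u
    rw [← SimpleGraph.card_neighborFinset_eq_degree]
    have hsplit : H.neighborFinset (φ u) =
        (H.neighborFinset (φ u)).filter (· ∈ R) ∪
        (H.neighborFinset (φ u)).filter (· ∉ R) :=
      (Finset.filter_union_filter_not_eq _ _).symm
    rw [hsplit]
    apply le_trans (Finset.card_union_le _ _)
    have h1 : ((H.neighborFinset (φ u)).filter (· ∈ R)).card ≤
        (s.filter (fun v => G.Adj ↑u v)).card := by
      apply Finset.card_le_card_of_injOn ρ
      · intro b hb
        simp only [Finset.mem_coe, Finset.mem_filter, SimpleGraph.mem_neighborFinset] at hb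
        obtain ⟨hadj, hbR⟩ := hb
        obtain ⟨v, -, hv⟩ := Finset.mem_image.1 hbR
        rw [← hv, hρφ]
        exact Finset.mem_filter.2 ⟨v.2, hadj_rr u v (hv ▸ hadj)⟩
      · intro b₁ hb₁ b₂ hb₂ he
        simp only [Finset.coe_filter, Set.mem_setOf_eq] at hb₁ hb₂
        obtain ⟨v₁, -, hv₁⟩ := Finset.mem_image.1 hb₁.2
        obtain ⟨v₂, -, hv₂⟩ := Finset.mem_image.1 hb₂.2
        rw [← hv₁, ← hv₂, hρφ, hρφ] at he
        rw [← hv₁, ← hv₂, Subtype.coe_injective he]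
    have h2 : ((H.neighborFinset (φ u)).filter (· ∉ R)).card ≤ k - d := by
      rw [← hRc]
      apply Finset.card_le_card
      intro b hb
      simp only [Finset.mem_filter] at hb
      exact Finset.mem_sdiff.2 ⟨Finset.mem_univ b, hb.2⟩
    omega
  -- sum over R
  have hsumR : ∑ a ∈ R, H.degree a ≤ d * (k - d) + E2 G w := by
    rw [hR, Finset.sum_image (fun x _ y _ h => φ.injective h)]
    have : ∑ u : ↥s, H.degree (φ u) ≤
        ∑ u : ↥s, ((k - d) + (s.filter (fun v => G.Adj ↑u v)).card) :=
      Finset.sum_le_sum (fun u _ => hdeg_in u)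
    apply le_trans this
    rw [Finset.sum_add_distrib, Finset.sum_const, Finset.card_univ, Fintype.card_coe,
      hcards, smul_eq_mul]
    have : ∑ u : ↥s, (s.filter (fun v => G.Adj ↑u v)).card = E2 G w := by
      rw [E2, ← hs]
      rw [← Finset.sum_attach s (fun u => (s.filter (fun v => G.Adj u v)).card)]
      rfl
    omega
  have hsumRc : ∑ a ∈ Finset.univ \ R, H.degree a ≤ (k - d) * (k - 1) := by
    apply le_trans (Finset.sum_le_sum (fun a _ => hdeg_out a))
    rw [Finset.sum_const, hRc, smul_eq_mul]
  have hsplit2 : ∑ a ∈ R, H.degree a + ∑ a ∈ Finset.univ \ R, H.degree a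
      = ∑ a : Fin k, H.degree a := by
    rw [add_comm, Finset.sum_sdiff (Finset.subset_univ R)]
  have hdk2 : d * (k - d) ≤ (k - d) * (k - 1) := by
    rcases Nat.lt_or_ge d k with h | h
    · exact Nat.mul_le_mul (by omega) (by omega) |>.trans_eq (Nat.mul_comm _ _) |>.trans_eq rfl
    · have : k - d = 0 := by omega
      simp [this]
  have hrw : 2 * (k - d) * (k - 1) = (k - d) * (k - 1) + (k - d) * (k - 1) := by ring
  omega

/-- **Aharoni–Alon–Berger.** Let `G` have maximum degree at most `k` and no induced
`K_{1,ℓ}`, and let `t(k,ℓ)` be the minimum number of edges of a graph on `k` vertices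
with no stable set of size `ℓ`. Then the largest Laplacian eigenvalue of `G` is at most
`2k - t(k,ℓ)/(k-1)`. -/
theorem stmt11 (k l : ℕ) (hk : 2 ≤ k) (hl : 2 ≤ l)
    {n : ℕ} (G : SimpleGraph (Fin n))
    (hdeg : ∀ v, deg G v ≤ k)
    (hstar : IsEmpty (starG l ↪g G))
    (t : ℕ)
    (ht : t = sInf {m : ℕ | ∃ H : SimpleGraph (Fin k), H.edgeSet.ncard = m ∧
        ¬ ∃ s : Finset (Fin k), s.card = l ∧
          (∀ x ∈ s, ∀ y ∈ s, x ≠ y → ¬ H.Adj x y)}) :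
    matMaxEig (lapMat G) ≤ 2 * (k : ℝ) - (t : ℝ) / ((k : ℝ) - 1) := by
  have hdeg' : ∀ v, G.degree v ≤ k := fun v => by
    rw [← deg_eq_degree]; exact hdeg v
  have hE2 : ∀ w, 2 * t ≤ E2 G w + 2 * (k - G.degree w) * (k - 1) :=
    fun w => aux_t_le hk hl G hdeg' hstar ht w
  have htk : (t : ℝ) ≤ (k : ℝ) * (k : ℝ) := by
    have hmem : (⊤ : SimpleGraph (Fin k)).edgeSet.ncard ∈
        {m : ℕ | ∃ H : SimpleGraph (Fin k), H.edgeSet.ncard = m ∧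
          ¬ ∃ s : Finset (Fin k), s.card = l ∧
            (∀ x ∈ s, ∀ y ∈ s, x ≠ y → ¬ H.Adj x y)} := by
      refine ⟨⊤, rfl, ?_⟩
      rintro ⟨s, hcard, hpair⟩
      obtain ⟨a, ha, b, hb, hab⟩ := Finset.one_lt_card.1 (by omega : 1 < s.card)
      exact hpair a ha b hb hab ((SimpleGraph.top_adj a b).2 hab)
    have h1 : t ≤ (⊤ : SimpleGraph (Fin k)).edgeSet.ncard := ht ▸ Nat.sInf_le hmem
    have h2 : (⊤ : SimpleGraph (Fin k)).edgeSet.ncard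
        = (⊤ : SimpleGraph (Fin k)).edgeFinset.card := by
      rw [← SimpleGraph.coe_edgeFinset, Set.ncard_coe_finset]
    have h3 : (⊤ : SimpleGraph (Fin k)).edgeFinset.card ≤ Fintype.card (Sym2 (Fin k)) :=
      Finset.card_le_univ _
    have h4 : Fintype.card (Sym2 (Fin k)) ≤ k * k := by
      rw [Sym2.card, Fintype.card_fin, Nat.choose_two_right]
      simp only [Nat.add_sub_cancel]
      apply Nat.div_le_of_le_mul
      nlinarith
    have : t ≤ k * k := by omega
    exact_mod_cast this
  exact main_analytic hk G hdeg' hE2 htk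
end

section
/- Let ℓ ≥ 2 and s ≥ 1 be integers, and let G' be a connected bipartite (ℓ-1)-regular finite simple graph. Let G_s be the s-clique extension of G'. Then: (i) G_s is regular of valency ℓs - 1; (ii) G_s contains no induced copy of K_{1,ℓ}; and (iii) the smallest eigenvalue of G_s equals -ℓs + 2s - 1. -/
open scoped Classical

/-- The `s`-clique extension of a graph `H`: each vertex `x` is replaced by a clique
`{x} × Fin s`, and `(x,i)` is adjacent to `(y,j)` iff `x ~ y` in `H`, or `x = y` and
`i ≠ j`. -/
def cliqueExt {V : Type*} (H : SimpleGraph V) (s : ℕ) : SimpleGraph (V × Fin s) :=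
  SimpleGraph.fromRel (fun x y => H.Adj x.1 y.1 ∨ x.1 = y.1)

lemma cliqueExt_adj {V : Type*} (G' : SimpleGraph V) {s : ℕ} (a b : V × Fin s) :
    (cliqueExt G' s).Adj a b ↔ (G'.Adj a.1 b.1 ∨ (a.1 = b.1 ∧ a.2 ≠ b.2)) := by
  simp only [cliqueExt, SimpleGraph.fromRel_adj]
  constructor
  · rintro ⟨hne, h | h⟩
    · rcases h with h | h
      · exact Or.inl h
      · exact Or.inr ⟨h, fun h2 => hne (Prod.ext h h2)⟩
    · rcases h with h | h
      · exact Or.inl h.symm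
      · exact Or.inr ⟨h.symm, fun h2 => hne (Prod.ext h.symm h2)⟩
  · rintro (h | ⟨h1, h2⟩)
    · exact ⟨fun he => G'.irrefl (he ▸ h), Or.inl (Or.inl h)⟩
    · exact ⟨fun he => h2 (congrArg Prod.snd he), Or.inl (Or.inr h1)⟩

lemma deg_eq_card {V : Type*} [Fintype V] (G : SimpleGraph V) (v : V) :
    deg G v = (Finset.univ.filter (fun w => G.Adj v w)).card := by
  rw [deg, Set.ncard_eq_toFinset_card']
  congr 1
  ext w
  simp [SimpleGraph.neighborSet, Set.mem_toFinset]
  exact Set.mem_toFinset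

lemma sum_adj_ite {V : Type*} [Fintype V] (G : SimpleGraph V) (x : V) (f : V → ℝ) :
    ∑ y, (if G.Adj x y then f y else 0) =
      ∑ y ∈ Finset.univ.filter (fun w => G.Adj x w), f y := by
  rw [Finset.sum_filter]

lemma deg_cliqueExt {V : Type*} [Fintype V] (G' : SimpleGraph V) (l s : ℕ)
    (hl : 2 ≤ l) (hs : 1 ≤ s) (hreg : ∀ v, deg G' v = l - 1) (x : V × Fin s) :
    deg (cliqueExt G' s) x = l * s - 1 := by
  obtain ⟨x, i⟩ := x
  rw [deg_eq_card]
  have hset : Finset.univ.filter (fun w => (cliqueExt G' s).Adj (x, i) w) =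
      ((Finset.univ.filter (fun y => G'.Adj x y)) ×ˢ Finset.univ) ∪
      ({x} ×ˢ ({i}ᶜ : Finset (Fin s))) := by
    ext ⟨y, j⟩
    simp only [Finset.mem_filter, Finset.mem_univ, true_and, Finset.mem_union,
      Finset.mem_product, Finset.mem_singleton, Finset.mem_compl, cliqueExt_adj]
    constructor
    · rintro (h | ⟨h1, h2⟩)
      · exact Or.inl ⟨h, trivial⟩
      · exact Or.inr ⟨h1.symm, fun hj => h2 hj.symm⟩
    · rintro (⟨h, -⟩ | ⟨h1, h2⟩)
      · exact Or.inl h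
      · exact Or.inr ⟨h1.symm, fun hj => h2 hj.symm⟩
  rw [hset, Finset.card_union_of_disjoint, Finset.card_product, Finset.card_product]
  · have h1 : (Finset.univ.filter (fun y => G'.Adj x y)).card = l - 1 := by
      rw [← deg_eq_card]; exact hreg x
    rw [h1]
    simp only [Finset.card_univ, Fintype.card_fin, Finset.card_singleton,
      Finset.card_compl, Finset.card_singleton]
    have : s ≤ l * s := Nat.le_mul_of_pos_left s (by omega)
    have : (l - 1) * s = l * s - s := by rw [Nat.sub_mul, one_mul]
    omega
  · rw [Finset.disjoint_left]
    rintro ⟨y, j⟩ hy hx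
    simp only [Finset.mem_product, Finset.mem_filter, Finset.mem_univ, true_and,
      Finset.mem_singleton] at hy hx
    exact G'.irrefl (hx.1 ▸ hy.1)

lemma starG_adj (t : ℕ) (a b : Fin (t+1)) :
    (starG t).Adj a b ↔ a ≠ b ∧ (a = 0 ∨ b = 0) := by
  simp only [starG, SimpleGraph.fromRel_adj]

lemma no_star {V : Type*} [Fintype V] (G' : SimpleGraph V) (l s : ℕ)
    (hl : 2 ≤ l) (hs : 1 ≤ s) (hreg : ∀ v, deg G' v = l - 1) :
    IsEmpty (starG l ↪g cliqueExt G' s) := by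
  constructor
  intro f
  set x : V := (f 0).1 with hx
  -- the leaves
  set g : Fin l → V := fun k => (f k.succ).1 with hg
  have hadj : ∀ k : Fin l, (cliqueExt G' s).Adj (f k.succ) (f 0) := by
    intro k
    rw [f.map_rel_iff, starG_adj]
    exact ⟨Fin.succ_ne_zero k, Or.inr rfl⟩
  have hginj : Function.Injective g := by
    intro k m hkm
    by_contra hne
    have hfne : f k.succ ≠ f m.succ := by
      intro h
      exact hne (Fin.succ_injective l (f.injective h))
    have hsnd : (f k.succ).2 ≠ (f m.succ).2 := by
      intro h2
      exact hfne (Prod.ext hkm h2)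
    have : (cliqueExt G' s).Adj (f k.succ) (f m.succ) :=
      (cliqueExt_adj G' _ _).2 (Or.inr ⟨hkm, hsnd⟩)
    rw [f.map_rel_iff, starG_adj] at this
    rcases this.2 with h | h
    · exact Fin.succ_ne_zero k h
    · exact Fin.succ_ne_zero m h
  have hmem : ∀ k : Fin l, g k ∈ insert x (Finset.univ.filter (fun y => G'.Adj x y)) := by
    intro k
    have := (cliqueExt_adj G' _ _).1 (hadj k)
    rcases this with h | ⟨h1, -⟩
    · simp only [Finset.mem_insert, Finset.mem_filter, Finset.mem_univ, true_and]
      exact Or.inr h.symm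
    · simp only [Finset.mem_insert]
      exact Or.inl h1
  have hcardT : (insert x (Finset.univ.filter (fun y => G'.Adj x y))).card ≤ l := by
    have h1 : (Finset.univ.filter (fun y => G'.Adj x y)).card = l - 1 := by
      rw [← deg_eq_card]; exact hreg x
    calc (insert x (Finset.univ.filter (fun y => G'.Adj x y))).card
        ≤ (Finset.univ.filter (fun y => G'.Adj x y)).card + 1 := Finset.card_insert_le _ _
      _ ≤ l := by omega
  have himage : Finset.image g Finset.univ = insert x (Finset.univ.filter (fun y => G'.Adj x y)) := by
    apply Finset.eq_of_subset_of_card_le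
    · intro y hy
      simp only [Finset.mem_image, Finset.mem_univ, true_and] at hy
      obtain ⟨k, rfl⟩ := hy
      exact hmem k
    · rw [Finset.card_image_of_injective _ hginj, Finset.card_univ, Fintype.card_fin]
      exact hcardT
  -- x is in the image
  have hxmem : x ∈ Finset.image g Finset.univ := by
    rw [himage]; exact Finset.mem_insert_self _ _
  obtain ⟨k, -, hk⟩ := Finset.mem_image.1 hxmem
  -- a neighbor of x exists and is in the image
  have hNne : ∃ y, G'.Adj x y := by
    have h1 : (Finset.univ.filter (fun y => G'.Adj x y)).card = l - 1 := by
      rw [← deg_eq_card]; exact hreg x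
    have : (Finset.univ.filter (fun y => G'.Adj x y)).Nonempty := by
      rw [← Finset.card_pos, h1]; omega
    obtain ⟨y, hy⟩ := this
    exact ⟨y, (Finset.mem_filter.1 hy).2⟩
  obtain ⟨y, hy⟩ := hNne
  have hymem : y ∈ Finset.image g Finset.univ := by
    rw [himage]
    exact Finset.mem_insert_of_mem (by simp [hy])
  obtain ⟨m, -, hm⟩ := Finset.mem_image.1 hymem
  have hadjkm : (cliqueExt G' s).Adj (f k.succ) (f m.succ) := by
    apply (cliqueExt_adj G' _ _).2
    exact Or.inl (by rw [show (f k.succ).1 = g k from rfl, show (f m.succ).1 = g m from rfl, hk, hm]; exact hy)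
  rw [f.map_rel_iff, starG_adj] at hadjkm
  rcases hadjkm.2 with h | h
  · exact Fin.succ_ne_zero k h
  · exact Fin.succ_ne_zero m h

lemma sum_ite_const {V : Type*} [Fintype V] (P : V → Prop) (C : ℝ) :
    ∑ y, (if P y then C else 0) = ((Finset.univ.filter P).card : ℝ) * C := by
  rw [← Finset.sum_filter, Finset.sum_const, nsmul_eq_mul]

lemma eig_mem {V : Type*} [Fintype V] [Nonempty V] (G' : SimpleGraph V) (l s : ℕ)
    (hl : 2 ≤ l) (hs : 1 ≤ s) (hbip : G'.Colorable 2) (hreg : ∀ v, deg G' v = l - 1) :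
    ∃ v : V × Fin s → ℝ, v ≠ 0 ∧
      (adjMat (cliqueExt G' s)).mulVec v = (-(l : ℝ) * s + 2 * s - 1) • v := by
  obtain ⟨c⟩ := hbip
  set w : V → ℝ := fun x => if c x = 0 then 1 else -1 with hw
  have hwne : ∀ x, w x ≠ 0 := by
    intro x; simp only [hw]; split_ifs <;> norm_num
  have hwadj : ∀ {x y}, G'.Adj x y → w y = -w x := by
    intro x y hA
    have hne : c x ≠ c y := c.valid hA
    simp only [hw]
    split_ifs with h1 h2
    · exact absurd (h2.trans h1.symm) hne
    · norm_num
    · norm_num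
    · exfalso
      have hx1 : c x = 1 := by omega
      have hy1 : c y = 1 := by omega
      exact hne (hx1.trans hy1.symm)
  refine ⟨fun a => w a.1, ?_, ?_⟩
  · intro h
    obtain ⟨x⟩ := ‹Nonempty V›
    have := congrFun h (x, ⟨0, hs⟩)
    exact hwne x this
  · funext a
    obtain ⟨x, i⟩ := a
    simp only [Matrix.mulVec, dotProduct, adjMat, Matrix.of_apply, Pi.smul_apply,
      smul_eq_mul, ite_mul, one_mul, zero_mul]
    rw [Fintype.sum_prod_type]
    have hinner : ∀ y : V, (∑ j : Fin s, if (cliqueExt G' s).Adj (x, i) (y, j) then w y else 0)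
        = (if G'.Adj x y then (s : ℝ) * w y else 0) + (if x = y then ((s : ℝ) - 1) * w y else 0) := by
      intro y
      by_cases hA : G'.Adj x y
      · have hne : x ≠ y := G'.ne_of_adj hA
        simp only [hA, if_true, hne, if_false, add_zero]
        have : ∀ j : Fin s, (if (cliqueExt G' s).Adj (x, i) (y, j) then w y else 0) = w y := by
          intro j
          rw [if_pos]
          exact (cliqueExt_adj G' _ _).2 (Or.inl hA)
        rw [Finset.sum_congr rfl (fun j _ => this j), Finset.sum_const, Finset.card_univ,
          Fintype.card_fin, nsmul_eq_mul]
      · by_cases hxy : x = y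
        · subst hxy
          simp only [hA, if_false, eq_self_iff_true, if_true, zero_add]
          have : ∀ j : Fin s, (if (cliqueExt G' s).Adj (x, i) (x, j) then w x else 0)
              = (if i ≠ j then w x else 0) := by
            intro j
            congr 1
            rw [cliqueExt_adj]
            simp [G'.irrefl]
          rw [Finset.sum_congr rfl (fun j _ => this j)]
          have hsplit : ∀ j : Fin s, (if i ≠ j then w x else 0)
              = w x - (if i = j then w x else 0) := by
            intro j; by_cases h : i = j <;> simp [h]
          rw [Finset.sum_congr rfl (fun j _ => hsplit j), Finset.sum_sub_distrib,
            Finset.sum_const, Finset.card_univ, Fintype.card_fin, nsmul_eq_mul]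
          simp only [Finset.sum_ite_eq, Finset.mem_univ, if_true]
          ring
        · simp only [hA, if_false, hxy, if_false, add_zero]
          apply Finset.sum_eq_zero
          intro j _
          rw [if_neg]
          rw [cliqueExt_adj]
          simp [hA, hxy]
    rw [Finset.sum_congr rfl (fun y _ => hinner y), Finset.sum_add_distrib]
    have h2 : (∑ y, if x = y then ((s : ℝ) - 1) * w y else 0) = ((s : ℝ) - 1) * w x := by
      rw [Finset.sum_ite_eq]
      simp
    have h1 : (∑ y, if G'.Adj x y then (s : ℝ) * w y else 0)
        = ((l : ℝ) - 1) * ((s : ℝ) * (-w x)) := by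
      have : ∀ y, (if G'.Adj x y then (s : ℝ) * w y else 0)
          = (if G'.Adj x y then (s : ℝ) * (-w x) else 0) := by
        intro y
        by_cases hA : G'.Adj x y
        · rw [if_pos hA, if_pos hA, hwadj hA]
        · rw [if_neg hA, if_neg hA]
      rw [Finset.sum_congr rfl (fun y _ => this y), sum_ite_const, ← deg_eq_card, hreg,
        Nat.cast_sub (by omega), Nat.cast_one]
    rw [h1, h2]
    ring

lemma eig_lb {V : Type*} [Fintype V] (G' : SimpleGraph V) (l s : ℕ)
    (hl : 2 ≤ l) (hs : 1 ≤ s) (hreg : ∀ v, deg G' v = l - 1)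
    (μ : ℝ) (v : V × Fin s → ℝ) (hv : v ≠ 0)
    (heq : (adjMat (cliqueExt G' s)).mulVec v = μ • v) :
    -(l : ℝ) * s + 2 * s - 1 ≤ μ := by
  set S : V → ℝ := fun x => ∑ j, v (x, j) with hS
  set Q : V → ℝ := fun x => ∑ j, v (x, j) ^ 2 with hQ
  set E : ℝ := ∑ x, ∑ y, (if G'.Adj x y then S x * S y else 0) with hE
  set vv : ℝ := ∑ a, v a ^ 2 with hvv
  -- vv = sum of Q
  have hvvQ : vv = ∑ x, Q x := by
    rw [hvv, Fintype.sum_prod_type]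
  have hvvpos : 0 < vv := by
    rcases Function.ne_iff.1 hv with ⟨a, ha⟩
    exact Finset.sum_pos' (fun b _ => sq_nonneg _)
      ⟨a, Finset.mem_univ a, (sq_nonneg _).lt_of_ne (Ne.symm (pow_ne_zero 2 ha))⟩
  -- degree as a real count
  have hdegsum : ∀ (x : V) (C : ℝ),
      (∑ y, if G'.Adj x y then C else 0) = ((l : ℝ) - 1) * C := by
    intro x C
    rw [sum_ite_const, ← deg_eq_card, hreg, Nat.cast_sub (by omega), Nat.cast_one]
  -- quadratic form identity
  have hquad : μ * vv = E + ∑ x, (S x ^ 2 - Q x) := by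
    have lhs : (∑ a, v a * ((adjMat (cliqueExt G' s)).mulVec v a)) = μ * vv := by
      rw [heq, hvv, Finset.mul_sum]
      refine Finset.sum_congr rfl fun a _ => ?_
      simp [Pi.smul_apply, smul_eq_mul]; ring
    rw [← lhs]
    have expand : (∑ a, v a * ((adjMat (cliqueExt G' s)).mulVec v a))
        = ∑ a, ∑ b, (if (cliqueExt G' s).Adj a b then v a * v b else 0) := by
      refine Finset.sum_congr rfl fun a _ => ?_
      simp only [Matrix.mulVec, dotProduct, adjMat, Matrix.of_apply, Finset.mul_sum]
      refine Finset.sum_congr rfl fun b _ => ?_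
      split_ifs <;> ring
    rw [expand]
    rw [Fintype.sum_prod_type]
    have step1 : ∀ x : V, ∀ i : Fin s,
        (∑ b : V × Fin s, if (cliqueExt G' s).Adj (x, i) b then v (x, i) * v b else 0)
        = (∑ y, if G'.Adj x y then v (x, i) * S y else 0)
          + (v (x, i) * S x - v (x, i) ^ 2) := by
      intro x i
      rw [Fintype.sum_prod_type]
      have inner : ∀ y : V,
          (∑ j : Fin s, if (cliqueExt G' s).Adj (x, i) (y, j) then v (x, i) * v (y, j) else 0)
          = (if G'.Adj x y then v (x, i) * S y else 0)
            + (if x = y then v (x, i) * S x - v (x, i) ^ 2 else 0) := by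
        intro y
        by_cases hA : G'.Adj x y
        · have hne : x ≠ y := G'.ne_of_adj hA
          simp only [hA, if_true, hne, if_false, add_zero]
          have : ∀ j : Fin s, (if (cliqueExt G' s).Adj (x, i) (y, j)
              then v (x, i) * v (y, j) else 0) = v (x, i) * v (y, j) := by
            intro j
            rw [if_pos ((cliqueExt_adj G' _ _).2 (Or.inl hA))]
          rw [Finset.sum_congr rfl (fun j _ => this j), ← Finset.mul_sum]
        · by_cases hxy : x = y
          · subst hxy
            simp only [hA, if_false, eq_self_iff_true, if_true, zero_add]
            have : ∀ j : Fin s, (if (cliqueExt G' s).Adj (x, i) (x, j)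
                then v (x, i) * v (x, j) else 0)
                = v (x, i) * v (x, j) - (if i = j then v (x, i) * v (x, j) else 0) := by
              intro j
              have hadj : (cliqueExt G' s).Adj (x, i) (x, j) ↔ ¬ (i = j) := by
                rw [cliqueExt_adj]; simp [G'.irrefl]
              by_cases h : i = j
              · rw [if_neg (fun hc => (hadj.1 hc) h), if_pos h]; ring
              · rw [if_pos (hadj.2 h), if_neg h]; ring
            rw [Finset.sum_congr rfl (fun j _ => this j), Finset.sum_sub_distrib,
              ← Finset.mul_sum]
            simp only [Finset.sum_ite_eq, Finset.mem_univ, if_true]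
            ring
          · simp only [hA, if_false, hxy, if_false, add_zero]
            apply Finset.sum_eq_zero
            intro j _
            rw [if_neg]
            rw [cliqueExt_adj]
            simp [hA, hxy]
      rw [Finset.sum_congr rfl (fun y _ => inner y), Finset.sum_add_distrib]
      congr 1
      rw [Finset.sum_ite_eq]
      simp
    have step2 : ∀ x : V,
        (∑ i : Fin s, ((∑ y, if G'.Adj x y then v (x, i) * S y else 0)
          + (v (x, i) * S x - v (x, i) ^ 2)))
        = (∑ y, if G'.Adj x y then S x * S y else 0) + (S x ^ 2 - Q x) := by
      intro x
      rw [Finset.sum_add_distrib]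
      congr 1
      · rw [Finset.sum_comm]
        refine Finset.sum_congr rfl fun y _ => ?_
        by_cases hA : G'.Adj x y
        · simp only [hA, if_true]
          rw [← Finset.sum_mul]
        · simp [hA]
      · have e1 : (∑ i : Fin s, v (x, i)) = S x := rfl
        have e2 : (∑ i : Fin s, v (x, i) ^ 2) = Q x := rfl
        rw [Finset.sum_sub_distrib, ← Finset.sum_mul, e1, e2]
        ring
    calc (∑ x, ∑ i : Fin s,
          ∑ b : V × Fin s, if (cliqueExt G' s).Adj (x, i) b then v (x, i) * v b else 0)
        = ∑ x, ((∑ y, if G'.Adj x y then S x * S y else 0) + (S x ^ 2 - Q x)) := by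
          refine Finset.sum_congr rfl fun x _ => ?_
          rw [Finset.sum_congr rfl (fun i _ => step1 x i), step2 x]
      _ = E + ∑ x, (S x ^ 2 - Q x) := by rw [Finset.sum_add_distrib]
  -- lower bound on E
  have hEbound : -((l : ℝ) - 1) * (∑ x, S x ^ 2) ≤ E := by
    have h0 : (0 : ℝ) ≤ ∑ x, ∑ y, (if G'.Adj x y then (S x + S y) ^ 2 else 0) := by
      refine Finset.sum_nonneg fun x _ => Finset.sum_nonneg fun y _ => ?_
      split_ifs
      · exact sq_nonneg _
      · exact le_rfl
    have hexp : ∀ x y : V, (if G'.Adj x y then (S x + S y) ^ 2 else 0)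
        = (if G'.Adj x y then S x ^ 2 else 0) + (if G'.Adj x y then S y ^ 2 else 0)
          + 2 * (if G'.Adj x y then S x * S y else 0) := by
      intro x y
      split_ifs <;> ring
    have h1 : (∑ x, ∑ y, if G'.Adj x y then S x ^ 2 else 0)
        = ((l : ℝ) - 1) * ∑ x, S x ^ 2 := by
      rw [Finset.mul_sum]
      exact Finset.sum_congr rfl fun x _ => hdegsum x (S x ^ 2)
    have h2 : (∑ x, ∑ y, if G'.Adj x y then S y ^ 2 else 0)
        = ((l : ℝ) - 1) * ∑ x, S x ^ 2 := by
      rw [Finset.sum_comm]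
      rw [← h1]
      refine Finset.sum_congr rfl fun y _ => Finset.sum_congr rfl fun x _ => ?_
      rw [G'.adj_comm]
    have h3 : (∑ x, ∑ y, ((if G'.Adj x y then S x ^ 2 else 0)
        + (if G'.Adj x y then S y ^ 2 else 0)
        + 2 * (if G'.Adj x y then S x * S y else 0)))
        = ((l : ℝ) - 1) * (∑ x, S x ^ 2) + ((l : ℝ) - 1) * (∑ x, S x ^ 2) + 2 * E := by
      simp only [Finset.sum_add_distrib, ← Finset.mul_sum]
      rw [h1, h2, hE]
    rw [Finset.sum_congr rfl (fun x _ => Finset.sum_congr rfl (fun y _ => hexp x y)), h3] at h0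
    linarith
  -- put everything together
  set P : ℝ := ∑ x, S x ^ 2 with hP
  have hPnn : 0 ≤ P := Finset.sum_nonneg fun x _ => sq_nonneg _
  have hCS : P ≤ (s : ℝ) * vv := by
    have hx : ∀ x : V, S x ^ 2 ≤ (s : ℝ) * Q x := by
      intro x
      have := sq_sum_le_card_mul_sum_sq (s := (Finset.univ : Finset (Fin s)))
        (f := fun j => v (x, j))
      simpa [Finset.card_univ] using this
    calc P ≤ ∑ x, (s : ℝ) * Q x := Finset.sum_le_sum fun x _ => hx x
      _ = (s : ℝ) * vv := by rw [hvvQ, Finset.mul_sum]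
  have hl' : (2 : ℝ) ≤ (l : ℝ) := by exact_mod_cast hl
  have hquad' : μ * vv = E + P - vv := by
    rw [hquad, Finset.sum_sub_distrib, ← hP, ← hvvQ]
    ring
  have hprod : 0 ≤ ((l : ℝ) - 2) * ((s : ℝ) * vv - P) :=
    mul_nonneg (by linarith) (by linarith)
  have key : (-(l : ℝ) * s + 2 * s - 1) * vv ≤ μ * vv := by
    nlinarith [hEbound, hquad', hprod]
  exact le_of_mul_le_mul_right key hvvpos

/-- The `s`-clique extension of a connected bipartite `(ℓ-1)`-regular graph is
`(ℓs-1)`-regular, has no induced `K_{1,ℓ}`, and has smallest eigenvalue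
`-ℓs + 2s - 1`. -/
theorem stmt12 (l s : ℕ) (hl : 2 ≤ l) (hs : 1 ≤ s)
    {V : Type*} [Fintype V] (G' : SimpleGraph V)
    (hconn : G'.Connected) (hbip : G'.Colorable 2)
    (hreg : ∀ v, deg G' v = l - 1) :
    (∀ x : V × Fin s, deg (cliqueExt G' s) x = l * s - 1) ∧
    IsEmpty (starG l ↪g cliqueExt G' s) ∧
    minEig (cliqueExt G' s) = -(l : ℝ) * (s : ℝ) + 2 * (s : ℝ) - 1 := by
  have hVne : Nonempty V := hconn.nonempty
  refine ⟨deg_cliqueExt G' l s hl hs hreg, no_star G' l s hl hs hreg, ?_⟩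
  obtain ⟨v, hv, hveq⟩ := eig_mem G' l s hl hs hbip hreg
  have hmem : (-(l : ℝ) * s + 2 * s - 1) ∈
      {μ : ℝ | ∃ w : V × Fin s → ℝ, w ≠ 0 ∧
        (adjMat (cliqueExt G' s)).mulVec w = μ • w} := ⟨v, hv, hveq⟩
  have hlb : ∀ μ ∈ {μ : ℝ | ∃ w : V × Fin s → ℝ, w ≠ 0 ∧
      (adjMat (cliqueExt G' s)).mulVec w = μ • w}, (-(l : ℝ) * s + 2 * s - 1) ≤ μ := by
    rintro μ ⟨w, hw, hweq⟩
    exact eig_lb G' l s hl hs hreg μ w hw hweq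
  rw [minEig, matMinEig]
  exact le_antisymm (csInf_le ⟨_, hlb⟩ hmem) (le_csInf ⟨_, hmem⟩ hlb)
end

section
/- Let λ be a positive real number and let G be a finite simple graph of order n ≥ 3 with largest adjacency eigenvalue λ₀(G). If λ₀(G) > λ and for every proper induced subgraph H of G the largest eigenvalue λ₀(H) of H is at most λ, then λ₀(G) ≤ ((n-1)/(n-2))·λ. -/
open scoped Classical

/-- The largest eigenvalue of a graph. -/
noncomputable def maxEig {V : Type*} [Fintype V] (G : SimpleGraph V) : ℝ :=
  matMaxEig (adjMat G)

open Matrix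

/-- For a real symmetric matrix on a nonempty finite type, `matMaxEig` is attained by an
eigenvector and bounds the Rayleigh quotient. -/
lemma rayleigh_aux {V : Type*} [Fintype V] [DecidableEq V] [Nonempty V]
    {A : Matrix V V ℝ} (hA : A.IsHermitian) :
    (∃ x : V → ℝ, x ≠ 0 ∧ A.mulVec x = matMaxEig A • x) ∧
    (∀ x : V → ℝ, x ⬝ᵥ A.mulVec x ≤ matMaxEig A * (x ⬝ᵥ x)) := by
  classical
  set S : Set ℝ := {μ : ℝ | ∃ v : V → ℝ, v ≠ 0 ∧ A.mulVec v = μ • v} with hS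
  obtain ⟨i₀, hi₀⟩ := Finite.exists_max hA.eigenvalues
  set M : ℝ := hA.eigenvalues i₀ with hM
  have hle : ∀ i, hA.eigenvalues i ≤ M := hi₀
  set U : Matrix V V ℝ := (hA.eigenvectorUnitary : Matrix V V ℝ) with hU
  have hstar : ∀ x : V → ℝ, ∀ z : V → ℝ, x ⬝ᵥ (U *ᵥ z) = ((star U) *ᵥ x) ⬝ᵥ z := by
    intro x z
    rw [dotProduct_mulVec]
    congr 1
    ext i
    simp [vecMul, dotProduct, mulVec, conjTranspose_apply, mul_comm]
  have hform : ∀ x : V → ℝ,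
      x ⬝ᵥ (A *ᵥ x) = ∑ i, hA.eigenvalues i * ((star U *ᵥ x) i)^2 := by
    intro x
    conv_lhs => rw [hA.spectral_theorem, Unitary.conjStarAlgAut_apply, ← Unitary.coe_star]
    rw [← hU, ← mulVec_mulVec, ← mulVec_mulVec, hstar]
    simp only [dotProduct, mulVec_diagonal, Function.comp_apply, sq]
    exact Finset.sum_congr rfl fun i _ => by
      simp [RCLike.ofReal]; ring
  have hnorm : ∀ x : V → ℝ, x ⬝ᵥ x = ∑ i, ((star U *ᵥ x) i)^2 := by
    intro x
    have h1 : U * star U = 1 := Unitary.coe_mul_star_self (hA.eigenvectorUnitary)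
    calc x ⬝ᵥ x = x ⬝ᵥ ((U * star U) *ᵥ x) := by rw [h1, one_mulVec]
    _ = x ⬝ᵥ (U *ᵥ (star U *ᵥ x)) := by rw [← mulVec_mulVec]
    _ = (star U *ᵥ x) ⬝ᵥ (star U *ᵥ x) := hstar _ _
    _ = ∑ i, ((star U *ᵥ x) i)^2 := by simp [dotProduct, sq]
  have hray : ∀ x : V → ℝ, x ⬝ᵥ (A *ᵥ x) ≤ M * (x ⬝ᵥ x) := by
    intro x
    rw [hform, hnorm, Finset.mul_sum]
    exact Finset.sum_le_sum fun i _ =>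
      mul_le_mul_of_nonneg_right (hle i) (sq_nonneg _)
  have hMS : M ∈ S := ⟨hA.eigenvectorBasis i₀, (not_congr (WithLp.ofLp_eq_zero 2)).mpr (hA.eigenvectorBasis.orthonormal.ne_zero i₀),
    hA.mulVec_eigenvectorBasis i₀⟩
  have hSM : ∀ μ ∈ S, μ ≤ M := by
    rintro μ ⟨v, hv, hAv⟩
    have hvv : (0:ℝ) < v ⬝ᵥ v := by
      have hne : v ⬝ᵥ v ≠ 0 := fun h => hv (by
        ext i
        have := (Finset.sum_eq_zero_iff_of_nonneg
          (fun j _ => mul_self_nonneg (v j))).mp h i (Finset.mem_univ i)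
        simpa [mul_self_eq_zero] using this)
      exact lt_of_le_of_ne (Finset.sum_nonneg fun j _ => mul_self_nonneg (v j)) (Ne.symm hne)
    have h2 : μ * (v ⬝ᵥ v) ≤ M * (v ⬝ᵥ v) := by
      have := hray v
      rwa [hAv, dotProduct_smul, smul_eq_mul] at this
    exact le_of_mul_le_mul_right h2 hvv
  have hMeq : matMaxEig A = M :=
    le_antisymm (csSup_le ⟨M, hMS⟩ hSM) (le_csSup ⟨M, fun μ hμ => hSM μ hμ⟩ hMS)
  exact ⟨hMeq ▸ hMS, fun x => hMeq ▸ hray x⟩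

lemma adjMat_isHermitian {V : Type*} [Fintype V] (G : SimpleGraph V) :
    (adjMat G).IsHermitian := by
  show (adjMat G)ᴴ = adjMat G
  ext i j
  simp only [conjTranspose_apply, adjMat, of_apply, star_trivial]
  exact if_congr (G.adj_comm j i) rfl rfl

lemma adjMat_symm {V : Type*} [Fintype V] (G : SimpleGraph V) (i j : V) :
    adjMat G i j = adjMat G j i := by
  simp only [adjMat, of_apply]
  exact if_congr (G.adj_comm i j) rfl rfl

lemma adjMat_diag {V : Type*} [Fintype V] (G : SimpleGraph V) (v : V) :
    adjMat G v v = 0 := by simp [adjMat]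

/-- If `G` is a graph on `n ≥ 3` vertices with largest eigenvalue `λ₀(G) > λ` and every
proper induced subgraph has largest eigenvalue at most `λ`, then
`λ₀(G) ≤ (n-1)/(n-2) · λ`. -/
theorem stmt13 (lam : ℝ) (hlam : 0 < lam) {n : ℕ} (hn : 3 ≤ n)
    (G : SimpleGraph (Fin n))
    (h0 : lam < maxEig G)
    (hsub : ∀ s : Finset (Fin n), s ≠ Finset.univ → maxEig (G.induce ↑s) ≤ lam) :
    maxEig G ≤ ((n : ℝ) - 1) / ((n : ℝ) - 2) * lam := by
  haveI : NeZero n := ⟨by omega⟩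
  set A := adjMat G with hAdef
  have hA := adjMat_isHermitian G
  have hsymm : ∀ i j, A i j = A j i := adjMat_symm G
  have hdiag : ∀ v, A v v = 0 := adjMat_diag G
  obtain ⟨⟨x, hx0, hx⟩, -⟩ := rayleigh_aux (A := A) hA
  set μ : ℝ := maxEig G with hμ
  have hxμ : A.mulVec x = μ • x := hx
  have hxi : ∀ i, (A *ᵥ x) i = μ * x i := fun i => by rw [hxμ]; rfl
  set N : ℝ := ∑ i, (x i)^2 with hN
  have hNpos : 0 < N := by
    have hne : N ≠ 0 := fun h => hx0 (by
      ext i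
      have := (Finset.sum_eq_zero_iff_of_nonneg
        (fun j _ => sq_nonneg (x j))).mp h i (Finset.mem_univ i)
      simpa [pow_eq_zero_iff] using this)
    exact lt_of_le_of_ne (Finset.sum_nonneg fun j _ => sq_nonneg (x j)) (Ne.symm hne)
  have hμpos : 0 < μ := hlam.trans h0
  -- per-vertex inequality
  have key : ∀ v : Fin n, (μ - lam) * N ≤ (2*μ - lam) * (x v)^2 := by
    intro v
    set s : Finset (Fin n) := Finset.univ.erase v with hs
    have hsne : s ≠ Finset.univ := fun h => by
      have : v ∈ s := h ▸ Finset.mem_univ v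
      exact (Finset.notMem_erase v _) this
    have hlamH : maxEig (G.induce ↑s) ≤ lam := hsub s hsne
    obtain ⟨w, hw⟩ := Fintype.exists_ne_of_one_lt_card
      (by simp only [Fintype.card_fin]; omega) v
    haveI : Nonempty ↥(↑s : Set (Fin n)) := ⟨⟨w, by simp [hs, hw]⟩⟩
    set B := adjMat (G.induce (↑s : Set (Fin n))) with hBdef
    have hB := adjMat_isHermitian (G.induce (↑s : Set (Fin n)))
    obtain ⟨-, hrayB⟩ := rayleigh_aux (A := B) hB
    set y : ↥(↑s : Set (Fin n)) → ℝ := fun i => x ↑i with hy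
    have hBij : ∀ i j : ↥(↑s : Set (Fin n)), B i j = A ↑i ↑j := by
      intro i j
      simp only [hBdef, hAdef, adjMat, of_apply]
      exact if_congr Iff.rfl rfl rfl
    have hmem : ∀ a : Fin n, a ∈ s ↔ a ∈ (↑s : Set (Fin n)) := fun a => Finset.mem_coe.symm
    have hyy : y ⬝ᵥ y = N - (x v)^2 := by
      have h1 : y ⬝ᵥ y = ∑ i ∈ s, (x i)^2 := by
        rw [show y ⬝ᵥ y = ∑ i : ↥(↑s : Set (Fin n)), (x ↑i)^2 by
          simp [dotProduct, hy, sq]]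
        exact (Finset.sum_subtype s hmem (fun i => (x i)^2)).symm
      rw [h1, hs, Finset.sum_erase_eq_sub (Finset.mem_univ v)]
    have hyBy : y ⬝ᵥ (B *ᵥ y) = μ * N - 2 * μ * (x v)^2 := by
      have h1 : y ⬝ᵥ (B *ᵥ y) = ∑ i ∈ s, ∑ j ∈ s, x i * (A i j * x j) := by
        rw [show y ⬝ᵥ (B *ᵥ y)
            = ∑ i : ↥(↑s : Set (Fin n)), ∑ j : ↥(↑s : Set (Fin n)),
              x ↑i * (A ↑i ↑j * x ↑j) by
          simp only [dotProduct, mulVec, Finset.mul_sum]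
          exact Finset.sum_congr rfl fun i _ => Finset.sum_congr rfl fun j _ => by
            rw [hBij]]
        rw [← Finset.sum_subtype s hmem
          (fun i => ∑ j : ↥(↑s : Set (Fin n)), x i * (A i ↑j * x ↑j))]
        exact Finset.sum_congr rfl fun i _ =>
          (Finset.sum_subtype s hmem (fun j => x i * (A i j * x j))).symm
      have h2 : ∀ i : Fin n, ∑ j ∈ s, x i * (A i j * x j)
          = x i * (μ * x i) - x i * (A i v * x v) := by
        intro i
        rw [hs, Finset.sum_erase_eq_sub (Finset.mem_univ v)]
        congr 1
        rw [← Finset.mul_sum]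
        congr 1
        rw [← hxi i]
        rfl
      rw [h1]
      simp only [h2]
      rw [Finset.sum_sub_distrib]
      have h3 : ∑ i ∈ s, x i * (μ * x i) = μ * N - μ * (x v)^2 := by
        rw [hs, Finset.sum_erase_eq_sub (Finset.mem_univ v)]
        rw [show ∑ i : Fin n, x i * (μ * x i) = μ * N by
          rw [hN, Finset.mul_sum]; exact Finset.sum_congr rfl fun i _ => by ring]
        ring_nf
      have h4 : ∑ i ∈ s, x i * (A i v * x v) = μ * (x v)^2 := by
        rw [hs, Finset.sum_erase_eq_sub (Finset.mem_univ v)]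
        rw [hdiag v]
        have hAvx : ∑ i, A v i * x i = μ * x v := hxi v
        have h5 : ∑ i : Fin n, x i * (A i v * x v) = x v * (μ * x v) := by
          rw [Finset.sum_congr rfl
            (fun i _ => show x i * (A i v * x v) = (A v i * x i) * x v by
              rw [hsymm i v]; ring)]
          rw [← Finset.sum_mul, hAvx]
          ring
        rw [h5]; ring
      rw [h3, h4]; ring
    have hyy0 : (0:ℝ) ≤ y ⬝ᵥ y :=
      Finset.sum_nonneg fun j _ => mul_self_nonneg (y j)
    have hB2 : y ⬝ᵥ (B *ᵥ y) ≤ lam * (y ⬝ᵥ y) :=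
      (hrayB y).trans (mul_le_mul_of_nonneg_right hlamH hyy0)
    rw [hyBy, hyy] at hB2
    nlinarith [sq_nonneg (x v)]
  -- sum over all vertices
  have hsum : (n : ℝ) * ((μ - lam) * N) ≤ (2*μ - lam) * N := by
    have h := Finset.sum_le_sum (fun v (_ : v ∈ Finset.univ) => key v)
    rw [Finset.sum_const, Finset.card_univ, Fintype.card_fin, nsmul_eq_mul,
      ← Finset.mul_sum] at h
    rw [hN]
    exact h
  have hn3 : (3:ℝ) ≤ (n:ℝ) := by exact_mod_cast hn
  have hnn : (0:ℝ) < (n:ℝ) - 2 := by linarith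
  rw [div_mul_eq_mul_div, le_div_iff₀ hnn]
  have hineq : (n : ℝ) * (μ - lam) ≤ 2*μ - lam := by nlinarith [hNpos]
  nlinarith
end

section
/- (Greaves–Koolen–Park) Let m be a positive real number and let G be a finite simple graph with smallest adjacency eigenvalue -m that contains H(a, t) as an induced subgraph, where H(a, t) is the graph on a + t + 1 vertices consisting of a clique K_{a+t} together with one additional vertex adjacent to exactly a vertices of this clique. Then (a - m(m-1))·(t - (m-1)²) ≤ (m(m-1))². -/
open scoped Classical

/-- The graph `H(a,t)` on `a + t + 1` vertices: a clique on the first `a + t` vertices,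
together with a last vertex adjacent to exactly the first `a` vertices of the clique. -/
def Hgraph (a t : ℕ) : SimpleGraph (Fin (a + t + 1)) :=
  SimpleGraph.fromRel
    (fun x y => (x.val < a + t ∧ y.val < a + t) ∨ (x.val = a + t ∧ y.val < a))

section Aux

open Matrix

theorem GKP.shift_psd {V : Type*} [Fintype V] [DecidableEq V] {A : Matrix V V ℝ}
    (hA : A.IsHermitian) (c : ℝ) (hc : ∀ i, c ≤ hA.eigenvalues i) :
    (A - c • (1 : Matrix V V ℝ)).PosSemidef := by
  have key : A - c • (1 : Matrix V V ℝ)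
      = (hA.eigenvectorUnitary : Matrix V V ℝ) *
        Matrix.diagonal (fun i => hA.eigenvalues i - c) *
        (star hA.eigenvectorUnitary : Matrix V V ℝ) := by
    have hsp := hA.spectral_theorem
    rw [Unitary.conjStarAlgAut_apply] at hsp
    have hdiag : Matrix.diagonal (fun i => hA.eigenvalues i - c)
        = Matrix.diagonal (RCLike.ofReal ∘ hA.eigenvalues) - c • (1 : Matrix V V ℝ) := by
      rw [Matrix.smul_one_eq_diagonal, ← Matrix.diagonal_sub]
      simp [RCLike.ofReal_real_eq_id]
    rw [hdiag, Matrix.mul_sub, Matrix.sub_mul, ← hsp]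
    congr 1
    rw [Matrix.mul_smul, Matrix.smul_mul, mul_one,
      (Matrix.mem_unitaryGroup_iff).mp (hA.eigenvectorUnitary).2]
  rw [key]
  exact (Matrix.PosSemidef.diagonal (fun i => by simpa using hc i)).mul_mul_conjTranspose_same _

theorem GKP.rayleigh {V : Type*} [Fintype V] [DecidableEq V] [Nonempty V] {A : Matrix V V ℝ}
    (hA : A.IsHermitian) (v : V → ℝ) :
    matMinEig A * (v ⬝ᵥ v) ≤ v ⬝ᵥ A.mulVec v := by
  obtain ⟨i0⟩ := (inferInstance : Nonempty V)
  set S := {μ : ℝ | ∃ v : V → ℝ, v ≠ 0 ∧ A.mulVec v = μ • v} with hS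
  set c : ℝ := ⨅ i, hA.eigenvalues i with hcdef
  have hc : ∀ i, c ≤ hA.eigenvalues i := fun i =>
    ciInf_le (Set.Finite.bddBelow (Set.finite_range _)) i
  have hpsd := GKP.shift_psd hA c hc
  have hQF : ∀ w : V → ℝ, c * (w ⬝ᵥ w) ≤ w ⬝ᵥ A.mulVec w := by
    intro w
    have := hpsd.dotProduct_mulVec_nonneg w
    rw [star_trivial, Matrix.sub_mulVec, dotProduct_sub, Matrix.smul_mulVec,
      Matrix.one_mulVec, dotProduct_smul, smul_eq_mul] at this
    linarith [this]
  have hmem : c ∈ S := by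
    obtain ⟨i, hi⟩ := exists_eq_ciInf_of_finite (f := hA.eigenvalues)
    exact ⟨⇑(hA.eigenvectorBasis i), by simpa using hA.eigenvectorBasis.orthonormal.ne_zero i, by
      rw [hA.mulVec_eigenvectorBasis, hi]⟩
  have hbdd : ∀ μ ∈ S, c ≤ μ := by
    rintro μ ⟨w, hw0, hw⟩
    have hnn : 0 ≤ w ⬝ᵥ w := Finset.sum_nonneg fun j _ => mul_self_nonneg (w j)
    have hpos : 0 < w ⬝ᵥ w :=
      lt_of_le_of_ne hnn (fun h => hw0 (dotProduct_self_eq_zero.mp h.symm))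
    have h1 := hQF w
    rw [hw, dotProduct_smul, smul_eq_mul] at h1
    exact (mul_le_mul_iff_of_pos_right hpos).mp h1
  have h1 : matMinEig A ≤ c := csInf_le ⟨c, hbdd⟩ hmem
  calc matMinEig A * (v ⬝ᵥ v) ≤ c * (v ⬝ᵥ v) :=
        mul_le_mul_of_nonneg_right h1 (Finset.sum_nonneg fun j _ => mul_self_nonneg (v j))
      _ ≤ v ⬝ᵥ A.mulVec v := hQF v

theorem GKP.dot_self_embed {n N : ℕ} (f : Fin N ↪ Fin n) (val : Fin N → ℝ) :
    (fun x => ∑ i, if f i = x then val i else 0) ⬝ᵥ (fun x => ∑ i, if f i = x then val i else 0)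
      = ∑ i, val i * val i := by
  simp only [dotProduct, Finset.sum_mul, Finset.mul_sum]
  rw [Finset.sum_comm]
  simp [ite_mul, mul_ite, Finset.sum_ite_eq, f.injective.eq_iff]

theorem GKP.dot_mulVec_embed {n N : ℕ} (A : Matrix (Fin n) (Fin n) ℝ) (f : Fin N ↪ Fin n)
    (val : Fin N → ℝ) :
    (fun x => ∑ i, if f i = x then val i else 0) ⬝ᵥ
      A.mulVec (fun x => ∑ i, if f i = x then val i else 0)
      = ∑ i, ∑ j, val i * (A (f i) (f j) * val j) := by
  have h1 : ∀ x, A.mulVec (fun x => ∑ i, if f i = x then val i else 0) x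
      = ∑ j, A x (f j) * val j := by
    intro x
    simp only [Matrix.mulVec, dotProduct, Finset.mul_sum, mul_ite, mul_zero]
    rw [Finset.sum_comm]
    simp [Finset.sum_ite_eq]
  show ∑ x, _ * A.mulVec _ x = _
  simp only [h1]
  simp only [Finset.sum_mul, ite_mul, zero_mul]
  rw [Finset.sum_comm]
  simp [Finset.sum_ite_eq, Finset.mul_sum]

theorem GKP.Hadj (a t : ℕ) (i j : Fin (a + t + 1)) :
    (Hgraph a t).Adj i j ↔ i.val ≠ j.val ∧
      ¬((i.val = a + t ∧ a ≤ j.val) ∨ (j.val = a + t ∧ a ≤ i.val)) := by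
  have hi := i.isLt
  have hj := j.isLt
  rw [Hgraph, SimpleGraph.fromRel_adj, ← Fin.val_ne_iff]
  constructor
  · rintro ⟨hne, h⟩; exact ⟨hne, by omega⟩
  · rintro ⟨hne, h⟩; exact ⟨hne, by omega⟩

theorem GKP.sum_val (a t : ℕ) (g : ℕ → ℝ) (α β γ' : ℝ)
    (h1 : ∀ k, k < a → g k = α) (h2 : ∀ k, a ≤ k → k < a + t → g k = β)
    (h3 : g (a + t) = γ') :
    ∑ i : Fin (a + t + 1), g i.val = a * α + t * β + γ' := by
  rw [Fin.sum_univ_eq_sum_range, Finset.sum_range_succ, h3, Finset.range_eq_Ico,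
    ← Finset.sum_Ico_consecutive _ (Nat.zero_le a) (Nat.le_add_right a t)]
  rw [Finset.sum_congr rfl (fun k hk => h1 k (Finset.mem_Ico.mp hk).2),
    Finset.sum_congr rfl (fun k hk => h2 k (Finset.mem_Ico.mp hk).1 (Finset.mem_Ico.mp hk).2)]
  simp [mul_comm]

theorem GKP.quad_sum (a t : ℕ) (α β γ' : ℝ) :
    (∑ i : Fin (a + t + 1), ∑ j : Fin (a + t + 1),
      (if (Hgraph a t).Adj i j then
        (fun i : Fin (a+t+1) => if i.val < a then α else if i.val < a + t then β else γ') i *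
        (fun i : Fin (a+t+1) => if i.val < a then α else if i.val < a + t then β else γ') j
      else 0))
    = (a*α + t*β + γ')^2 - (a*α^2 + t*β^2 + γ'^2) - 2*(t*β)*γ' := by
  set val : Fin (a+t+1) → ℝ := fun i => if i.val < a then α else if i.val < a + t then β else γ'
    with hval
  set g1 : Fin (a+t+1) → ℝ := fun i => if i.val = a + t then val i else 0 with hg1
  set g2 : Fin (a+t+1) → ℝ := fun i => if a ≤ i.val ∧ i.val < a + t then val i else 0 with hg2
  have hpt : ∀ i j : Fin (a+t+1), (if (Hgraph a t).Adj i j then val i * val j else 0)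
      = val i * val j - (if i = j then val i * val j else 0) - (g1 i * g2 j + g2 i * g1 j) := by
    intro i j
    have hadj := GKP.Hadj a t i j
    have hi := i.isLt
    have hj := j.isLt
    by_cases h0 : i = j
    · subst h0
      have : ¬ (Hgraph a t).Adj i i := SimpleGraph.irrefl _
      rw [if_neg this, if_pos rfl]
      by_cases h1 : i.val = a + t
      · have : ¬(a ≤ i.val ∧ i.val < a + t) := by omega
        simp [hg1, hg2, this]
      · simp [hg1, hg2, h1]
    · have hne : i.val ≠ j.val := by
        simpa [Fin.val_ne_iff] using h0
      rw [if_neg h0]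
      by_cases hb : (i.val = a + t ∧ a ≤ j.val) ∨ (j.val = a + t ∧ a ≤ i.val)
      · have hnadj : ¬ (Hgraph a t).Adj i j := by rw [hadj]; tauto
        rw [if_neg hnadj]
        rcases hb with ⟨h1, h2⟩ | ⟨h1, h2⟩
        · have hg1i : g1 i = val i := by simp [hg1, h1]
          have hg2j : g2 j = val j := by simp [hg2, h2] <;> omega
          have hg2i : g2 i = 0 := by simp [hg2] <;> omega
          have hg1j : g1 j = 0 := by simp [hg1] <;> omega
          rw [hg1i, hg2j, hg2i, hg1j]; ring
        · have hg1j : g1 j = val j := by simp [hg1, h1]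
          have hg2i : g2 i = val i := by simp [hg2, h2] <;> omega
          have hg1i : g1 i = 0 := by simp [hg1] <;> omega
          have hg2j : g2 j = 0 := by simp [hg2] <;> omega
          rw [hg1j, hg2i, hg1i, hg2j]; ring
      · have hadj' : (Hgraph a t).Adj i j := by rw [hadj]; exact ⟨hne, hb⟩
        rw [if_pos hadj']
        have hg1g2 : g1 i * g2 j = 0 := by
          by_cases h1 : i.val = a + t
          · have : ¬(a ≤ j.val ∧ j.val < a + t) := by omega
            simp [hg2, this]
          · simp [hg1, h1]
        have hg2g1 : g2 i * g1 j = 0 := by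
          by_cases h1 : j.val = a + t
          · have : ¬(a ≤ i.val ∧ i.val < a + t) := by omega
            simp [hg2, this]
          · simp [hg1, h1]
        rw [hg1g2, hg2g1]; ring
  calc (∑ i : Fin (a + t + 1), ∑ j, (if (Hgraph a t).Adj i j then val i * val j else 0))
      = ∑ i : Fin (a + t + 1), ∑ j,
        (val i * val j - (if i = j then val i * val j else 0) - (g1 i * g2 j + g2 i * g1 j)) := by
        refine Finset.sum_congr rfl fun i _ => Finset.sum_congr rfl fun j _ => hpt i j
    _ = (∑ i, ∑ j, val i * val j) - (∑ i, val i * val i)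
        - ((∑ i, ∑ j, g1 i * g2 j) + (∑ i, ∑ j, g2 i * g1 j)) := by
        simp [Finset.sum_sub_distrib, Finset.sum_add_distrib, Finset.sum_ite_eq]
    _ = (∑ i, val i) * (∑ j, val j) - (∑ i, val i * val i)
        - ((∑ i, g1 i) * (∑ j, g2 j) + (∑ i, g2 i) * (∑ j, g1 j)) := by
        rw [Finset.sum_mul_sum, Finset.sum_mul_sum, Finset.sum_mul_sum]
    _ = (a*α + t*β + γ')^2 - (a*α^2 + t*β^2 + γ'^2) - 2*(t*β)*γ' := by
        have hS0 : (∑ i, val i) = a*α + t*β + γ' := by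
          refine GKP.sum_val a t (fun k => if k < a then α else if k < a + t then β else γ') α β γ'
            (fun k hk => by simp [hk]) (fun k hk1 hk2 => by simp [hk2] <;> omega) (by simp)
        have hS1 : (∑ i, val i * val i) = a*α^2 + t*β^2 + γ'^2 := by
          refine GKP.sum_val a t (fun k => (if k < a then α else if k < a + t then β else γ') *
            (if k < a then α else if k < a + t then β else γ')) (α^2) (β^2) (γ'^2) ?_ ?_ ?_
          · intro k hk; simp [hk]; ring
          · intro k hk1 hk2
            have : ¬ k < a := by omega
            simp [hk2, this]; ring
          · simp; ring
        have hSg1 : (∑ i, g1 i) = γ' := by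
          have := GKP.sum_val a t (fun k => if k = a + t then
            (if k < a then α else if k < a + t then β else γ') else 0) 0 0 γ'
            (fun k hk => by simp <;> omega) (fun k hk1 hk2 => by simp <;> omega) (by simp)
          simpa using this
        have hSg2 : (∑ i, g2 i) = t*β := by
          have := GKP.sum_val a t (fun k => if a ≤ k ∧ k < a + t then
            (if k < a then α else if k < a + t then β else γ') else 0) 0 β 0
            (fun k hk => by simp <;> omega) (fun k hk1 hk2 => by simp [hk1, hk2] <;> omega)
            (by simp)
          simpa using this
        rw [hS0, hS1, hSg1, hSg2]; ring

end Aux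

/-- **Greaves–Koolen–Park.** If a graph with smallest eigenvalue `-m` (where `m > 0`)
contains `H(a,t)` as an induced subgraph, then
`(a - m(m-1))(t - (m-1)²) ≤ (m(m-1))²`. -/
theorem stmt19 (m : ℝ) (hm : 0 < m) (a t : ℕ) {n : ℕ} (G : SimpleGraph (Fin n))
    (hmin : minEig G = -m) (hsub : Nonempty (Hgraph a t ↪g G)) :
    ((a : ℝ) - m * (m - 1)) * ((t : ℝ) - (m - 1) ^ 2) ≤ (m * (m - 1)) ^ 2 := by
  obtain ⟨f⟩ := hsub
  have hherm : (adjMat G).IsHermitian := by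
    unfold Matrix.IsHermitian
    ext i j
    simp only [adjMat, Matrix.conjTranspose_apply, Matrix.of_apply, star_trivial]
    exact if_congr (SimpleGraph.adj_comm G j i) rfl rfl
  haveI hnemp : Nonempty (Fin n) := ⟨f ⟨0, by omega⟩⟩
  have hray : ∀ v : Fin n → ℝ,
      -m * (dotProduct v v) ≤ dotProduct v ((adjMat G).mulVec v) := by
    intro v
    have := GKP.rayleigh hherm v
    rwa [show matMinEig (adjMat G) = -m from hmin] at this
  -- G has an edge, hence m ≥ 1
  have hedge : ∃ x y : Fin n, G.Adj x y := by
    by_contra h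
    push_neg at h
    have hA0 : adjMat G = 0 := by
      ext x y
      simp [adjMat, h x y]
    have h0 : minEig G = 0 := by
      unfold minEig matMinEig
      have hset : {μ : ℝ | ∃ v : Fin n → ℝ, v ≠ 0 ∧ (adjMat G).mulVec v = μ • v} = {0} := by
        ext μ
        simp only [Set.mem_setOf_eq, Set.mem_singleton_iff]
        constructor
        · rintro ⟨v, hv0, hv⟩
          rw [hA0, Matrix.zero_mulVec] at hv
          by_contra hμ
          apply hv0
          funext x
          have hx := congrFun hv x
          have : μ * v x = 0 := by simpa using hx.symm
          rcases mul_eq_zero.mp this with h' | h'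
          · exact absurd h' hμ
          · exact h'
        · rintro rfl
          refine ⟨fun _ => 1, ?_, by simp [hA0]⟩
          intro hcon
          have := congrFun hcon (Classical.arbitrary (Fin n))
          simp at this
      rw [hset]
      exact csInf_singleton 0
    rw [hmin] at h0; linarith
  obtain ⟨x, y, hxy⟩ := hedge
  have hxyne : x ≠ y := G.ne_of_adj hxy
  have hm1 : (1:ℝ) ≤ m := by
    set v : Fin n → ℝ := (Pi.single x 1 : Fin n → ℝ) - Pi.single y 1 with hv
    have hvv : dotProduct v v = 2 := by
      rw [hv]
      rw [dotProduct_sub, sub_dotProduct, sub_dotProduct,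
        single_dotProduct, single_dotProduct,
        single_dotProduct, single_dotProduct]
      simp [Pi.single_apply, hxyne, Ne.symm hxyne]
      norm_num
    have hAxy : adjMat G x y = 1 := by simp [adjMat, hxy]
    have hAyx : adjMat G y x = 1 := by simp [adjMat, hxy.symm]
    have hAxx : adjMat G x x = 0 := by simp [adjMat]
    have hAyy : adjMat G y y = 0 := by simp [adjMat]
    have hvAv : dotProduct v ((adjMat G).mulVec v) = -2 := by
      rw [hv]
      rw [Matrix.mulVec_sub, Matrix.mulVec_single, Matrix.mulVec_single]
      rw [sub_dotProduct, dotProduct_sub, dotProduct_sub,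
        single_dotProduct, single_dotProduct,
        single_dotProduct, single_dotProduct]
      simp [hAxy, hAyx, hAxx, hAyy]
      norm_num
    have := hray v
    rw [hvv, hvAv] at this
    linarith
  -- master inequality
  have master : ∀ α β γ' : ℝ,
      0 ≤ ((a:ℝ)*α + t*β + γ')^2 - ((a:ℝ)*α^2 + t*β^2 + γ'^2) - 2*((t:ℝ)*β)*γ'
          + m*((a:ℝ)*α^2 + t*β^2 + γ'^2) := by
    intro α β γ'
    set val : Fin (a+t+1) → ℝ :=
      fun i => if i.val < a then α else if i.val < a + t then β else γ' with hvaldef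
    set w : Fin n → ℝ := fun x => ∑ i, if f.toEmbedding i = x then val i else 0 with hwdef
    have h2 : dotProduct w w = (a:ℝ)*α^2 + t*β^2 + γ'^2 := by
      rw [hwdef, GKP.dot_self_embed f.toEmbedding val]
      refine GKP.sum_val a t (fun k => (if k < a then α else if k < a + t then β else γ') *
        (if k < a then α else if k < a + t then β else γ')) (α^2) (β^2) (γ'^2) ?_ ?_ ?_
      · intro k hk; simp [hk]; ring
      · intro k hk1 hk2
        have : ¬ k < a := by omega
        simp [hk2, this]; ring
      · simp; ring
    have h3 : dotProduct w ((adjMat G).mulVec w)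
        = ((a:ℝ)*α + t*β + γ')^2 - ((a:ℝ)*α^2 + t*β^2 + γ'^2) - 2*((t:ℝ)*β)*γ' := by
      rw [hwdef, GKP.dot_mulVec_embed (adjMat G) f.toEmbedding val]
      have hterm : ∀ i j : Fin (a+t+1),
          val i * (adjMat G (f.toEmbedding i) (f.toEmbedding j) * val j)
          = if (Hgraph a t).Adj i j then val i * val j else 0 := by
        intro i j
        have : adjMat G (f.toEmbedding i) (f.toEmbedding j)
            = if (Hgraph a t).Adj i j then (1:ℝ) else 0 := by
          simp only [adjMat, Matrix.of_apply]
          exact if_congr f.map_adj_iff rfl rfl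
        rw [this]
        by_cases h : (Hgraph a t).Adj i j <;> simp [h]
      rw [Finset.sum_congr rfl fun i _ => Finset.sum_congr rfl fun j _ => hterm i j]
      exact GKP.quad_sum a t α β γ'
    have h1 := hray w
    rw [h2, h3] at h1
    linarith
  -- the key quantity
  have hD : 0 ≤ (a:ℝ)*(m-1)^2 + m*(m-1)*(t:ℝ) + m*(m-1)^2 - (a:ℝ)*(t:ℝ) := by
    have hta : (0:ℝ) ≤ (t:ℝ) := Nat.cast_nonneg t
    have haa : (0:ℝ) ≤ (a:ℝ) := Nat.cast_nonneg a
    rcases Nat.eq_zero_or_pos a with ha | ha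
    · subst ha; simp; nlinarith
    rcases Nat.eq_zero_or_pos t with ht | ht
    · subst ht; simp; nlinarith
    · have ha' : (1:ℝ) ≤ (a:ℝ) := by exact_mod_cast ha
      have ht' : (1:ℝ) ≤ (t:ℝ) := by exact_mod_cast ht
      have hq := master (m*t*(t+m-1)) (-(m*a*t)) (-(a*t*(t+m-1)))
      have hq2 : 0 ≤ m*(a:ℝ)*(t:ℝ)^2*((t:ℝ)+m-1) *
          ((a:ℝ)*(m-1)^2 + m*(m-1)*(t:ℝ) + m*(m-1)^2 - (a:ℝ)*(t:ℝ)) := by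
        nlinarith [hq]
      have hpos : 0 < m*(a:ℝ)*(t:ℝ)^2*((t:ℝ)+m-1) := by
        have : (0:ℝ) < (t:ℝ)+m-1 := by linarith
        positivity
      by_contra hcon
      push_neg at hcon
      exact absurd hq2 (not_le.mpr (mul_neg_of_pos_of_neg hpos hcon))
  nlinarith [hD]
end
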